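/- arXiv:1401.3232 — 4 statements merged into one kernel-verified Lean document; each statement's English description precedes it below -/
import Mathlib

section
/- For every set M, every team X of assignments into M, all tuples of variables x̄, ȳ, z̄ and every variable v: X satisfies the conditional independence atom ȳv ⊥_{x̄} z̄ if and only if X satisfies both ȳ ⊥_{x̄v} z̄ and v ⊥_{x̄} z̄ (here x̄v denotes the tuple x̄ extended by v, and ȳv the tuple ȳ extended by v). -/
/-- A team over a set `M` with domain `D` is a set of assignments `s : D → M`.
`X` satisfies the conditional independence atom `ȳ ⊥_{x̄} z̄` if for all `s, s' ∈ X`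
with `s(x̄) = s'(x̄)` there is `s'' ∈ X` with `s''(x̄) = s(x̄)`, `s''(ȳ) = s(ȳ)` and
`s''(z̄) = s'(z̄)`. -/
def indepAtom {D M : Type*} (X : Set (D → M)) (xs ys zs : List D) : Prop :=
  ∀ s ∈ X, ∀ s' ∈ X, xs.map s = xs.map s' →
    ∃ s'' ∈ X, xs.map s'' = xs.map s ∧ ys.map s'' = ys.map s ∧ zs.map s'' = zs.map s'

/-- `X` satisfies `ȳv ⊥_{x̄} z̄` iff `X` satisfies both `ȳ ⊥_{x̄v} z̄` and `v ⊥_{x̄} z̄`. -/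
theorem indep_extend_iff {D M : Type*} (X : Set (D → M)) (xs ys zs : List D) (v : D) :
    indepAtom X xs (ys ++ [v]) zs ↔
      indepAtom X (xs ++ [v]) ys zs ∧ indepAtom X xs [v] zs := by
  constructor
  · intro h
    constructor
    · intro s hs s' hs' hxs
      simp only [List.map_append, List.map_cons, List.map_nil] at hxs
      obtain ⟨hx, hv⟩ := List.append_inj' hxs rfl
      injection hv with h2
      obtain ⟨s'', hs'', h1, h2', h3⟩ := h s hs s' hs' hx
      simp only [List.map_append, List.map_cons, List.map_nil] at h2' ⊢
      obtain ⟨hy, hvv⟩ := List.append_inj' h2' rfl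
      injection hvv with hv2
      exact ⟨s'', hs'', by rw [h1, hv2], hy, h3⟩
    · intro s hs s' hs' hxs
      obtain ⟨s'', hs'', h1, h2, h3⟩ := h s hs s' hs' hxs
      simp only [List.map_append, List.map_cons, List.map_nil] at h2
      obtain ⟨-, hvv⟩ := List.append_inj' h2 rfl
      exact ⟨s'', hs'', h1, hvv, h3⟩
  · rintro ⟨h1, h2⟩ s hs s' hs' hxs
    obtain ⟨t, ht, htx, htv, htz⟩ := h2 s hs s' hs' hxs
    simp only [List.map_cons, List.map_nil, List.cons.injEq, and_true] at htv
    obtain ⟨s'', hs'', hx, hy, hz⟩ := h1 s hs t ht (by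
      simp only [List.map_append, List.map_cons, List.map_nil]
      rw [htx, htv])
    simp only [List.map_append, List.map_cons, List.map_nil] at hx
    obtain ⟨hxx, hvv⟩ := List.append_inj' hx rfl
    injection hvv with hv2
    refine ⟨s'', hs'', hxx, ?_, hz.trans htz⟩
    simp only [List.map_append, List.map_cons, List.map_nil]
    rw [hy, hv2]
end

section
/- For every set M, every team X of assignments into M, and all tuples of variables x̄, ū, v̄ with |ū| = |v̄|: X satisfies the inclusion atom x̄ū ⊆ x̄v̄ if and only if for every tuple ā ∈ M^{|x̄|}, the subteam X(x̄ = ā) satisfies the inclusion atom ū ⊆ v̄. -/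
/-- `X` satisfies the inclusion atom `x̄ ⊆ ȳ` (for tuples of the same length)
if `{s(x̄) : s ∈ X} ⊆ {s(ȳ) : s ∈ X}`. -/
def incAtom {D M : Type*} (X : Set (D → M)) (xs ys : List D) : Prop :=
  ∀ s ∈ X, ∃ s' ∈ X, xs.map s = ys.map s'

/-- `X ⊨ x̄ū ⊆ x̄v̄` iff for every tuple `ā ∈ M^{|x̄|}` the subteam
`X(x̄ = ā)` satisfies `ū ⊆ v̄`. -/
theorem inc_relativize_iff {D M : Type*} (X : Set (D → M)) (xs us vs : List D)
    (h : us.length = vs.length) :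
    incAtom X (xs ++ us) (xs ++ vs) ↔
      ∀ a : List M, a.length = xs.length →
        incAtom {s ∈ X | xs.map s = a} us vs := by
  constructor
  · intro H a _ s hs
    obtain ⟨hsX, hsa⟩ := hs
    obtain ⟨s', hs'X, heq⟩ := H s hsX
    rw [List.map_append, List.map_append] at heq
    have hsplit := List.append_inj heq (by simp)
    refine ⟨s', ⟨hs'X, ?_⟩, hsplit.2⟩
    rw [← hsplit.1, hsa]
  · intro H s hsX
    obtain ⟨s', hs', heq⟩ := H (xs.map s) (by simp) s ⟨hsX, rfl⟩
    exact ⟨s', hs'.1, by rw [List.map_append, List.map_append, heq, hs'.2]⟩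
end

section
/- Let M = {0,1,2} and let X = {s₀, s₁, s₂} be the team with domain {u,v,w} given by s₀(u,v,w) = (0,1,2), s₁(u,v,w) = (1,0,1), s₂(u,v,w) = (2,1,0). Then: (a) there is NO partition of X into disjoint sets Y and Z with Y ∪ Z = X such that {s(u) : s ∈ Y} ⊆ {s(v) : s ∈ Y} and {s(w) : s ∈ Z} ⊆ {s(v) : s ∈ Z}; but (b) for the team X[M/x] = {s[m/x] : s ∈ X, m ∈ M} obtained by extending each assignment with every possible value for a new variable x, it holds both that {s(w) : s ∈ X[M/x]} ⊆ {s(x) : s ∈ X[M/x]} and that there IS a partition of X[M/x] into disjoint Y′ and Z′ with Y′ ∪ Z′ = X[M/x], {s(u) : s ∈ Y′} ⊆ {s(v) : s ∈ Y′} and {s(w) : s ∈ Z′} ⊆ {s(v) : s ∈ Z′}. Consequently, under strict team semantics, M ⊨_X ∀x(w ⊆ x ∧ (u ⊆ v ∨ w ⊆ v)) but M ⊭_X u ⊆ v ∨ w ⊆ v. -/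
open FirstOrder FirstOrder.Language FirstOrder.Language.Structure

namespace TeamSem

universe u v w

/-- Formulas of team logic in negation normal form over a first-order language `L`,
with variables in `ℕ`: first-order literals, dependence atoms `=(x̄, y)`,
conditional independence atoms `ȳ ⊥_{x̄} z̄`, inclusion atoms `x̄ ⊆ ȳ`,
conjunction, disjunction and quantifiers. -/
inductive TF (L : FirstOrder.Language.{u, v}) : Type (max u v) where
  | rel : {n : ℕ} → L.Relations n → (Fin n → L.Term ℕ) → TF L
  | nrel : {n : ℕ} → L.Relations n → (Fin n → L.Term ℕ) → TF L
  | teq : L.Term ℕ → L.Term ℕ → TF L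
  | tne : L.Term ℕ → L.Term ℕ → TF L
  | dep : List ℕ → ℕ → TF L
  | indep : List ℕ → List ℕ → List ℕ → TF L
  | inc : List ℕ → List ℕ → TF L
  | and : TF L → TF L → TF L
  | or : TF L → TF L → TF L
  | ex : ℕ → TF L → TF L
  | all : ℕ → TF L → TF L

variable {L : FirstOrder.Language.{u, v}}

/-- The variables occurring in a term. -/
def tvars : L.Term ℕ → Set ℕ
  | .var n => {n}
  | .func _ ts => ⋃ i, tvars (ts i)

/-- Realization of a term under a partial assignment (an assignment whose domain is
the set of variables where it takes a `some` value). -/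
def oreal {M : Type w} [L.Structure M] (s : ℕ → Option M) : L.Term ℕ → Option M
  | .var n => s n
  | .func f ts =>
      if h : ∀ i, (oreal s (ts i)).isSome then
        some (funMap f fun i => (oreal s (ts i)).get (h i))
      else none

/-- The set of free variables of a team-logic formula. -/
def freeVars : TF L → Set ℕ
  | .rel _ ts => ⋃ i, tvars (ts i)
  | .nrel _ ts => ⋃ i, tvars (ts i)
  | .teq t u => tvars t ∪ tvars u
  | .tne t u => tvars t ∪ tvars u
  | .dep xs y => {n | n ∈ xs} ∪ {y}
  | .indep xs ys zs => {n | n ∈ xs ++ ys ++ zs}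
  | .inc xs ys => {n | n ∈ xs ++ ys}
  | .and φ ψ => freeVars φ ∪ freeVars ψ
  | .or φ ψ => freeVars φ ∪ freeVars ψ
  | .ex v φ => freeVars φ \ {v}
  | .all v φ => freeVars φ \ {v}

/-- The list of quantified (bound) variables of a formula, with multiplicity. -/
def boundVars : TF L → List ℕ
  | .and φ ψ => boundVars φ ++ boundVars ψ
  | .or φ ψ => boundVars φ ++ boundVars ψ
  | .ex v φ => v :: boundVars φ
  | .all v φ => v :: boundVars φ
  | _ => []

/-- The number of universal quantifiers occurring in a formula. -/
def uCount : TF L → ℕ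
  | .and φ ψ => uCount φ + uCount ψ
  | .or φ ψ => uCount φ + uCount ψ
  | .ex _ φ => uCount φ
  | .all _ φ => uCount φ + 1
  | _ => 0

/-- A dependence atom occurs in the formula. -/
def hasDep : TF L → Prop
  | .dep _ _ => True
  | .and φ ψ => hasDep φ ∨ hasDep ψ
  | .or φ ψ => hasDep φ ∨ hasDep ψ
  | .ex _ φ => hasDep φ
  | .all _ φ => hasDep φ
  | _ => False

/-- An independence atom occurs in the formula. -/
def hasIndep : TF L → Prop
  | .indep _ _ _ => True
  | .and φ ψ => hasIndep φ ∨ hasIndep ψ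
  | .or φ ψ => hasIndep φ ∨ hasIndep ψ
  | .ex _ φ => hasIndep φ
  | .all _ φ => hasIndep φ
  | _ => False

/-- An inclusion atom occurs in the formula. -/
def hasInc : TF L → Prop
  | .inc _ _ => True
  | .and φ ψ => hasInc φ ∨ hasInc ψ
  | .or φ ψ => hasInc φ ∨ hasInc ψ
  | .ex _ φ => hasInc φ
  | .all _ φ => hasInc φ
  | _ => False

/-- Quantifier-free formulas. -/
def quantFree : TF L → Prop
  | .and φ ψ => quantFree φ ∧ quantFree ψ
  | .or φ ψ => quantFree φ ∧ quantFree ψ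
  | .ex _ _ => False
  | .all _ _ => False
  | _ => True

/-- First-order formulas: no dependence, independence or inclusion atoms. -/
def isFO : TF L → Prop
  | .dep _ _ => False
  | .indep _ _ _ => False
  | .inc _ _ => False
  | .and φ ψ => isFO φ ∧ isFO ψ
  | .or φ ψ => isFO φ ∧ isFO ψ
  | .ex _ φ => isFO φ
  | .all _ φ => isFO φ
  | _ => True

/-- A dependency atom (dependence, independence or inclusion atom). -/
def isAtom : TF L → Prop
  | .dep _ _ => True
  | .indep _ _ _ => True
  | .inc _ _ => True
  | _ => False

/-- A conjunction of dependency atoms. -/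
def isAtomConj : TF L → Prop
  | .and φ ψ => isAtomConj φ ∧ isAtomConj ψ
  | φ => isAtom φ

/-- Strict team semantics.  A team is a set of partial assignments `ℕ → Option M`;
a variable is in the domain of an assignment iff the assignment gives it a `some`
value. -/
def strictSat (M : Type w) [L.Structure M] : Set (ℕ → Option M) → TF L → Prop
  | X, .rel R ts => ∀ s ∈ X, ∃ v, (∀ i, oreal s (ts i) = some (v i)) ∧ RelMap R v
  | X, .nrel R ts => ∀ s ∈ X, ∃ v, (∀ i, oreal s (ts i) = some (v i)) ∧ ¬ RelMap R v
  | X, .teq t u => ∀ s ∈ X, ∃ a : M, oreal s t = some a ∧ oreal s u = some a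
  | X, .tne t u => ∀ s ∈ X, ∃ a b : M, oreal s t = some a ∧ oreal s u = some b ∧ a ≠ b
  | X, .dep xs y => ∀ s ∈ X, ∀ s' ∈ X, xs.map s = xs.map s' → s y = s' y
  | X, .indep xs ys zs => ∀ s ∈ X, ∀ s' ∈ X, xs.map s = xs.map s' →
      ∃ s'' ∈ X, xs.map s'' = xs.map s ∧ ys.map s'' = ys.map s ∧ zs.map s'' = zs.map s'
  | X, .inc xs ys => ∀ s ∈ X, ∃ s' ∈ X, xs.map s = ys.map s'
  | X, .and φ ψ => strictSat M X φ ∧ strictSat M X ψ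
  | X, .or φ ψ => ∃ Y Z, Y ∪ Z = X ∧ Y ∩ Z = ∅ ∧ strictSat M Y φ ∧ strictSat M Z ψ
  | X, .ex v φ => ∃ F : (ℕ → Option M) → M,
      strictSat M ((fun s => Function.update s v (some (F s))) '' X) φ
  | X, .all v φ =>
      strictSat M {t | ∃ s ∈ X, ∃ m : M, t = Function.update s v (some m)} φ

/-- Lax team semantics: the splitting in the disjunction need not be disjoint, and
the existential quantifier may pick a nonempty set of witnesses for each assignment. -/
def laxSat (M : Type w) [L.Structure M] : Set (ℕ → Option M) → TF L → Prop
  | X, .rel R ts => ∀ s ∈ X, ∃ v, (∀ i, oreal s (ts i) = some (v i)) ∧ RelMap R v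
  | X, .nrel R ts => ∀ s ∈ X, ∃ v, (∀ i, oreal s (ts i) = some (v i)) ∧ ¬ RelMap R v
  | X, .teq t u => ∀ s ∈ X, ∃ a : M, oreal s t = some a ∧ oreal s u = some a
  | X, .tne t u => ∀ s ∈ X, ∃ a b : M, oreal s t = some a ∧ oreal s u = some b ∧ a ≠ b
  | X, .dep xs y => ∀ s ∈ X, ∀ s' ∈ X, xs.map s = xs.map s' → s y = s' y
  | X, .indep xs ys zs => ∀ s ∈ X, ∀ s' ∈ X, xs.map s = xs.map s' →
      ∃ s'' ∈ X, xs.map s'' = xs.map s ∧ ys.map s'' = ys.map s ∧ zs.map s'' = zs.map s'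
  | X, .inc xs ys => ∀ s ∈ X, ∃ s' ∈ X, xs.map s = ys.map s'
  | X, .and φ ψ => laxSat M X φ ∧ laxSat M X ψ
  | X, .or φ ψ => ∃ Y Z, Y ∪ Z = X ∧ laxSat M Y φ ∧ laxSat M Z ψ
  | X, .ex v φ => ∃ H : (ℕ → Option M) → Set M, (∀ s ∈ X, (H s).Nonempty) ∧
      laxSat M {t | ∃ s ∈ X, ∃ m ∈ H s, t = Function.update s v (some m)} φ
  | X, .all v φ =>
      laxSat M {t | ∃ s ∈ X, ∃ m : M, t = Function.update s v (some m)} φ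

/-- Ordinary (Tarskian) first-order satisfaction by a single assignment, for
first-order formulas.  (The value on the dependency atoms is irrelevant.) -/
def foSat (M : Type w) [L.Structure M] : (ℕ → Option M) → TF L → Prop
  | s, .rel R ts => ∃ v, (∀ i, oreal s (ts i) = some (v i)) ∧ RelMap R v
  | s, .nrel R ts => ∃ v, (∀ i, oreal s (ts i) = some (v i)) ∧ ¬ RelMap R v
  | s, .teq t u => ∃ a : M, oreal s t = some a ∧ oreal s u = some a
  | s, .tne t u => ∃ a b : M, oreal s t = some a ∧ oreal s u = some b ∧ a ≠ b
  | s, .and φ ψ => foSat M s φ ∧ foSat M s ψ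
  | s, .or φ ψ => foSat M s φ ∨ foSat M s ψ
  | s, .ex v φ => ∃ m : M, foSat M (Function.update s v (some m)) φ
  | s, .all v φ => ∀ m : M, foSat M (Function.update s v (some m)) φ
  | _, _ => True

/-- The empty assignment. -/
def emptyAssign (M : Type w) : ℕ → Option M := fun _ => none

/-- A sentence `φ` is true in `M` if the team `{∅}` consisting of the empty
assignment satisfies `φ` (strict semantics). -/
def tTrue (M : Type w) [L.Structure M] (φ : TF L) : Prop :=
  strictSat M {emptyAssign M} φ

/-- A sentence of `FO(C)(k∀)`: every variable is quantified exactly once, it has no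
free variables, and at most `k` universal quantifiers occur. -/
def sentenceKAll (φ : TF L) (k : ℕ) : Prop :=
  freeVars φ = ∅ ∧ (boundVars φ).Nodup ∧ uCount φ ≤ k

/-- Universal quantifier block. -/
def alls : List ℕ → TF L → TF L
  | [], φ => φ
  | v :: vs, φ => .all v (alls vs φ)

/-- Existential quantifier block. -/
def exs : List ℕ → TF L → TF L
  | [], φ => φ
  | v :: vs, φ => .ex v (exs vs φ)

end TeamSem

namespace TeamSem

open FirstOrder FirstOrder.Language

instance : FirstOrder.Language.empty.Structure (Fin 3) :=
  FirstOrder.Language.emptyStructure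

/-- The team `X = {s₀, s₁, s₂}` over `M = {0,1,2}` with domain `{u, v, w}`
(encoded as the coordinates `0, 1, 2`), given by `s₀(u,v,w) = (0,1,2)`,
`s₁(u,v,w) = (1,0,1)`, `s₂(u,v,w) = (2,1,0)`. -/
def exTeam : Set (Fin 3 → Fin 3) := {![0, 1, 2], ![1, 0, 1], ![2, 1, 0]}

/-- The team `X[M/x]` obtained by extending each assignment of `exTeam` with every
possible value for a new variable `x` (the fourth coordinate). -/
def exTeamExt : Set (Fin 4 → Fin 3) :=
  {t | ∃ s ∈ exTeam, ∃ m : Fin 3, t = Fin.snoc s m}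

/-- The same team as a team of partial assignments `ℕ → Option (Fin 3)` with
domain `{u, v, w} = {0, 1, 2}`. -/
def exTeam' : Set (ℕ → Option (Fin 3)) :=
  (fun s : Fin 3 → Fin 3 =>
    fun n : ℕ => if h : n < 3 then some (s ⟨n, h⟩) else none) '' exTeam

section Aux

/-- The three assignments of the example team. -/
abbrev sA : Fin 3 → Fin 3 := ![0, 1, 2]
abbrev sB : Fin 3 → Fin 3 := ![1, 0, 1]
abbrev sC : Fin 3 → Fin 3 := ![2, 1, 0]

lemma mem_exTeam {t : Fin 3 → Fin 3} : t ∈ exTeam ↔ t = sA ∨ t = sB ∨ t = sC := by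
  simp [exTeam]

/-- Part (a): no disjoint split of `exTeam`. -/
lemma partA : ¬ ∃ Y Z : Set (Fin 3 → Fin 3), Y ∪ Z = exTeam ∧ Y ∩ Z = ∅ ∧
    (fun s => s 0) '' Y ⊆ (fun s => s 1) '' Y ∧
    (fun s => s 2) '' Z ⊆ (fun s => s 1) '' Z := by
  rintro ⟨Y, Z, hU, hD, hY, hZ⟩
  have hYsub : Y ⊆ exTeam := hU ▸ Set.subset_union_left
  have hZsub : Z ⊆ exTeam := hU ▸ Set.subset_union_right
  -- sC cannot be in Y since no assignment has v-value 2
  have hCY : sC ∉ Y := by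
    intro h
    obtain ⟨t, htY, ht⟩ := hY ⟨sC, h, rfl⟩
    rcases mem_exTeam.mp (hYsub htY) with rfl | rfl | rfl <;>
      exact absurd ht (by decide)
  have hCZ : sC ∈ Z := by
    have : sC ∈ Y ∪ Z := hU ▸ (by exact Or.inr (Or.inr rfl))
    rcases this with h | h
    · exact absurd h hCY
    · exact h
  -- then sB ∈ Z, since sC's w-value 0 needs v-value 0
  have hBZ : sB ∈ Z := by
    obtain ⟨t, htZ, ht⟩ := hZ ⟨sC, hCZ, rfl⟩
    rcases mem_exTeam.mp (hZsub htZ) with rfl | rfl | rfl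
    · exact absurd ht (by decide)
    · exact htZ
    · exact absurd ht (by decide)
  have hBY : sB ∉ Y := by
    intro h
    have : sB ∈ Y ∩ Z := ⟨h, hBZ⟩
    rw [hD] at this
    exact this
  have hA : sA ∈ Y ∪ Z := hU ▸ (by exact Or.inl rfl)
  rcases hA with hAY | hAZ
  · -- sA's u-value 0 needs v-value 0 in Y, only sB has it
    obtain ⟨t, htY, ht⟩ := hY ⟨sA, hAY, rfl⟩
    rcases mem_exTeam.mp (hYsub htY) with rfl | rfl | rfl
    · exact absurd ht (by decide)
    · exact hBY htY
    · exact hCY htY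
  · -- sA's w-value 2 needs v-value 2 in Z, impossible
    obtain ⟨t, htZ, ht⟩ := hZ ⟨sA, hAZ, rfl⟩
    rcases mem_exTeam.mp (hZsub htZ) with rfl | rfl | rfl <;>
      exact absurd ht (by decide)

lemma snoc_lt (s : Fin 3 → Fin 3) (m : Fin 3) (i : Fin 3) :
    (Fin.snoc s m : Fin 4 → Fin 3) i.castSucc = s i := Fin.snoc_castSucc ..

lemma snoc_last (s : Fin 3 → Fin 3) (m : Fin 3) :
    (Fin.snoc s m : Fin 4 → Fin 3) 3 = m := by
  rw [show (3 : Fin 4) = Fin.last 3 from rfl, Fin.snoc_last]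

lemma snoc_inj {s s' : Fin 3 → Fin 3} {m m' : Fin 3}
    (h : (Fin.snoc s m : Fin 4 → Fin 3) = Fin.snoc s' m') : s = s' ∧ m = m' := by
  constructor
  · funext i
    have := congrFun h i.castSucc
    simpa [Fin.snoc] using this
  · have := congrFun h 3
    simpa [Fin.snoc] using this

/-- Part (b). -/
lemma partB : (fun t => t 2) '' exTeamExt ⊆ (fun t => t 3) '' exTeamExt ∧
    ∃ Y' Z' : Set (Fin 4 → Fin 3), Y' ∪ Z' = exTeamExt ∧ Y' ∩ Z' = ∅ ∧
      (fun t => t 0) '' Y' ⊆ (fun t => t 1) '' Y' ∧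
      (fun t => t 2) '' Z' ⊆ (fun t => t 1) '' Z' := by
  constructor
  · rintro x ⟨t, ⟨s, hs, m, rfl⟩, rfl⟩
    refine ⟨Fin.snoc s (s 2), ⟨s, hs, s 2, rfl⟩, ?_⟩
    show (Fin.snoc s (s 2) : Fin 4 → Fin 3) 3 = (Fin.snoc s m : Fin 4 → Fin 3) 2
    rw [snoc_last]
    exact (snoc_lt s m 2).symm
  · refine ⟨{t | ∃ m, t = Fin.snoc sA m} ∪ {Fin.snoc sB 1, Fin.snoc sB 2},
      {t | ∃ m, t = Fin.snoc sC m} ∪ {Fin.snoc sB 0}, ?_, ?_, ?_, ?_⟩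
    · ext t
      constructor
      · rintro ((⟨m, rfl⟩ | (rfl | rfl)) | (⟨m, rfl⟩ | rfl))
        · exact ⟨sA, Or.inl rfl, m, rfl⟩
        · exact ⟨sB, Or.inr (Or.inl rfl), 1, rfl⟩
        · exact ⟨sB, Or.inr (Or.inl rfl), 2, rfl⟩
        · exact ⟨sC, Or.inr (Or.inr rfl), m, rfl⟩
        · exact ⟨sB, Or.inr (Or.inl rfl), 0, rfl⟩
      · rintro ⟨s, hs, m, rfl⟩
        rcases mem_exTeam.mp hs with rfl | rfl | rfl
        · exact Or.inl (Or.inl ⟨m, rfl⟩)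
        · fin_cases m
          · exact Or.inr (Or.inr rfl)
          · exact Or.inl (Or.inr (Or.inl rfl))
          · exact Or.inl (Or.inr (Or.inr rfl))
        · exact Or.inr (Or.inl ⟨m, rfl⟩)
    · ext t
      simp only [Set.mem_inter_iff, Set.mem_empty_iff_false, iff_false]
      simp only [Set.mem_union, Set.mem_setOf_eq, Set.mem_insert_iff,
        Set.mem_singleton_iff]
      rintro ⟨h1, h2⟩
      have p1 : ∃ s1 m1, (s1 = sA ∨ (s1 = sB ∧ (m1 = 1 ∨ m1 = 2))) ∧
          t = Fin.snoc s1 m1 := by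
        rcases h1 with ⟨m1, h⟩ | h | h
        exacts [⟨sA, m1, Or.inl rfl, h⟩, ⟨sB, 1, Or.inr ⟨rfl, Or.inl rfl⟩, h⟩,
          ⟨sB, 2, Or.inr ⟨rfl, Or.inr rfl⟩, h⟩]
      have p2 : ∃ s2 m2, (s2 = sC ∨ (s2 = sB ∧ m2 = 0)) ∧ t = Fin.snoc s2 m2 := by
        rcases h2 with ⟨m2, h⟩ | h
        exacts [⟨sC, m2, Or.inl rfl, h⟩, ⟨sB, 0, Or.inr ⟨rfl, rfl⟩, h⟩]
      obtain ⟨s1, m1, c1, rfl⟩ := p1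
      obtain ⟨s2, m2, c2, h⟩ := p2
      obtain ⟨hs, hm⟩ := snoc_inj h
      rcases c1 with rfl | ⟨rfl, hm1⟩ <;> rcases c2 with rfl | ⟨rfl, rfl⟩
      · exact absurd hs (by decide)
      · exact absurd hs (by decide)
      · exact absurd hs (by decide)
      · rcases hm1 with rfl | rfl <;> exact absurd hm (by decide)
    · rintro x ⟨t, ht, rfl⟩
      rcases ht with ⟨m, rfl⟩ | (rfl | rfl)
      · refine ⟨Fin.snoc sB 1, Or.inr (Or.inl rfl), ?_⟩
        show (Fin.snoc sB 1 : Fin 4 → Fin 3) 1 = (Fin.snoc sA m : Fin 4 → Fin 3) 0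
        rw [show (1 : Fin 4) = Fin.castSucc 1 from rfl, snoc_lt,
          show (0 : Fin 4) = Fin.castSucc 0 from rfl, snoc_lt]
        decide
      · refine ⟨Fin.snoc sA 0, Or.inl ⟨0, rfl⟩, ?_⟩
        show (Fin.snoc sA 0 : Fin 4 → Fin 3) 1 = (Fin.snoc sB 1 : Fin 4 → Fin 3) 0
        rw [show (1 : Fin 4) = Fin.castSucc 1 from rfl, snoc_lt,
          show (0 : Fin 4) = Fin.castSucc 0 from rfl, snoc_lt]
        decide
      · refine ⟨Fin.snoc sA 0, Or.inl ⟨0, rfl⟩, ?_⟩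
        show (Fin.snoc sA 0 : Fin 4 → Fin 3) 1 = (Fin.snoc sB 2 : Fin 4 → Fin 3) 0
        rw [show (1 : Fin 4) = Fin.castSucc 1 from rfl, snoc_lt,
          show (0 : Fin 4) = Fin.castSucc 0 from rfl, snoc_lt]
        decide
    · rintro x ⟨t, ht, rfl⟩
      rcases ht with ⟨m, rfl⟩ | rfl
      · refine ⟨Fin.snoc sB 0, Or.inr rfl, ?_⟩
        show (Fin.snoc sB 0 : Fin 4 → Fin 3) 1 = (Fin.snoc sC m : Fin 4 → Fin 3) 2
        rw [show (1 : Fin 4) = Fin.castSucc 1 from rfl, snoc_lt,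
          show (2 : Fin 4) = Fin.castSucc 2 from rfl, snoc_lt]
        decide
      · refine ⟨Fin.snoc sC 0, Or.inl ⟨0, rfl⟩, ?_⟩
        show (Fin.snoc sC 0 : Fin 4 → Fin 3) 1 = (Fin.snoc sB 0 : Fin 4 → Fin 3) 2
        rw [show (1 : Fin 4) = Fin.castSucc 1 from rfl, snoc_lt,
          show (2 : Fin 4) = Fin.castSucc 2 from rfl, snoc_lt]
        decide

/-- Embedding of total assignments on `{0,1,2}` into partial assignments. -/
def e (s : Fin 3 → Fin 3) : ℕ → Option (Fin 3) :=
  fun n => if h : n < 3 then some (s ⟨n, h⟩) else none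

lemma exTeam'_eq : exTeam' = {e sA, e sB, e sC} := by
  simp only [exTeam', exTeam, Set.image_insert_eq, Set.image_singleton]
  rfl

/-- The extension of a total assignment with a value for variable 3. -/
def g (s : Fin 3 → Fin 3) (m : Fin 3) : ℕ → Option (Fin 3) :=
  Function.update (e s) 3 (some m)

lemma g_apply_lt (s : Fin 3 → Fin 3) (m : Fin 3) (n : ℕ) (h : n < 3) :
    g s m n = some (s ⟨n, h⟩) := by
  simp only [g, Function.update]
  rw [dif_neg (by omega)]
  simp [e, h]

lemma g_apply_3 (s : Fin 3 → Fin 3) (m : Fin 3) : g s m 3 = some m := by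
  simp [g]

lemma g_inj {s s' : Fin 3 → Fin 3} {m m' : Fin 3} (h : g s m = g s' m') :
    s = s' ∧ m = m' := by
  constructor
  · funext i
    have := congrFun h i.val
    rw [g_apply_lt s m i.val i.isLt, g_apply_lt s' m' i.val i.isLt] at this
    simpa using this
  · have := congrFun h 3
    rw [g_apply_3, g_apply_3] at this
    simpa using this

end Aux

/-- The team from the paper separating strict and lax semantics:
(a) `X` admits no disjoint splitting `Y ∪ Z = X` with `{s(u) : s ∈ Y} ⊆ {s(v) : s ∈ Y}`
and `{s(w) : s ∈ Z} ⊆ {s(v) : s ∈ Z}`;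
(b) for `X[M/x]` we have `{s(w)} ⊆ {s(x)}` and such a disjoint splitting exists;
consequently, under strict team semantics (with `u, v, w, x` encoded as the
variables `0, 1, 2, 3` and `M = Fin 3` a structure of the empty language),
`M ⊨_X ∀x(w ⊆ x ∧ (u ⊆ v ∨ w ⊆ v))` but `M ⊭_X u ⊆ v ∨ w ⊆ v`. -/
theorem strict_disjunction_not_local :
    -- (a)
    (¬ ∃ Y Z : Set (Fin 3 → Fin 3), Y ∪ Z = exTeam ∧ Y ∩ Z = ∅ ∧
        (fun s => s 0) '' Y ⊆ (fun s => s 1) '' Y ∧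
        (fun s => s 2) '' Z ⊆ (fun s => s 1) '' Z) ∧
    -- (b)
    ((fun t => t 2) '' exTeamExt ⊆ (fun t => t 3) '' exTeamExt ∧
      ∃ Y' Z' : Set (Fin 4 → Fin 3), Y' ∪ Z' = exTeamExt ∧ Y' ∩ Z' = ∅ ∧
        (fun t => t 0) '' Y' ⊆ (fun t => t 1) '' Y' ∧
        (fun t => t 2) '' Z' ⊆ (fun t => t 1) '' Z') ∧
    -- consequently, under strict team semantics:
    strictSat (Fin 3) exTeam'
      (TF.all 3 (TF.and (TF.inc [2] [3])
        (TF.or (TF.inc [0] [1]) (TF.inc [2] [1]))) : TF FirstOrder.Language.empty) ∧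
    ¬ strictSat (Fin 3) exTeam'
      (TF.or (TF.inc [0] [1]) (TF.inc [2] [1]) : TF FirstOrder.Language.empty) := by
  refine ⟨partA, partB, ?_, ?_⟩
  · -- strict satisfaction of ∀x (w ⊆ x ∧ (u ⊆ v ∨ w ⊆ v))
    simp only [strictSat]
    have hmem : ∀ t, (t ∈ {t | ∃ s ∈ exTeam', ∃ m : Fin 3,
        t = Function.update s 3 (some m)}) ↔
        ∃ s, (s = sA ∨ s = sB ∨ s = sC) ∧ ∃ m, t = g s m := by
      intro t
      constructor
      · rintro ⟨s', hs', m, rfl⟩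
        rw [exTeam'_eq] at hs'
        rcases hs' with rfl | rfl | rfl
        · exact ⟨sA, Or.inl rfl, m, rfl⟩
        · exact ⟨sB, Or.inr (Or.inl rfl), m, rfl⟩
        · exact ⟨sC, Or.inr (Or.inr rfl), m, rfl⟩
      · rintro ⟨s, hs, m, rfl⟩
        refine ⟨e s, ?_, m, rfl⟩
        rw [exTeam'_eq]
        rcases hs with rfl | rfl | rfl
        · exact Or.inl rfl
        · exact Or.inr (Or.inl rfl)
        · exact Or.inr (Or.inr rfl)
    constructor
    · -- w ⊆ x
      intro t ht
      obtain ⟨s, hs, m, rfl⟩ := (hmem _).mp ht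
      refine ⟨g s (s 2), (hmem _).mpr ⟨s, hs, s 2, rfl⟩, ?_⟩
      simp only [List.map_cons, List.map_nil, List.cons.injEq, and_true]
      rw [g_apply_lt s m 2 (by omega), g_apply_3]
      rfl
    · -- u ⊆ v ∨ w ⊆ v
      refine ⟨{g sA 0, g sA 1, g sA 2, g sB 1, g sB 2},
        {g sC 0, g sC 1, g sC 2, g sB 0}, ?_, ?_, ?_, ?_⟩
      · ext t
        rw [Set.mem_union, hmem]
        constructor
        · rintro ((rfl | rfl | rfl | rfl | rfl) | (rfl | rfl | rfl | rfl))
          · exact ⟨sA, Or.inl rfl, 0, rfl⟩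
          · exact ⟨sA, Or.inl rfl, 1, rfl⟩
          · exact ⟨sA, Or.inl rfl, 2, rfl⟩
          · exact ⟨sB, Or.inr (Or.inl rfl), 1, rfl⟩
          · exact ⟨sB, Or.inr (Or.inl rfl), 2, rfl⟩
          · exact ⟨sC, Or.inr (Or.inr rfl), 0, rfl⟩
          · exact ⟨sC, Or.inr (Or.inr rfl), 1, rfl⟩
          · exact ⟨sC, Or.inr (Or.inr rfl), 2, rfl⟩
          · exact ⟨sB, Or.inr (Or.inl rfl), 0, rfl⟩
        · rintro ⟨s, (rfl | rfl | rfl), m, rfl⟩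
          · fin_cases m
            · exact Or.inl (Or.inl rfl)
            · exact Or.inl (Or.inr (Or.inl rfl))
            · exact Or.inl (Or.inr (Or.inr (Or.inl rfl)))
          · fin_cases m
            · exact Or.inr (Or.inr (Or.inr (Or.inr rfl)))
            · exact Or.inl (Or.inr (Or.inr (Or.inr (Or.inl rfl))))
            · exact Or.inl (Or.inr (Or.inr (Or.inr (Or.inr rfl))))
          · fin_cases m
            · exact Or.inr (Or.inl rfl)
            · exact Or.inr (Or.inr (Or.inl rfl))
            · exact Or.inr (Or.inr (Or.inr (Or.inl rfl)))
      · ext t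
        simp only [Set.mem_inter_iff, Set.mem_empty_iff_false, iff_false]
        rintro ⟨h1, h2⟩
        rcases h1 with rfl | rfl | rfl | rfl | rfl <;>
          rcases h2 with h | h | h | h <;>
            first
            | exact absurd (g_inj h).1 (by decide)
            | exact absurd (g_inj h).2 (by decide)
      · -- u ⊆ v on Y
        intro t ht
        rcases ht with rfl | rfl | rfl | rfl | rfl
        · exact ⟨g sB 1, by simp, by
            simp only [List.map_cons, List.map_nil, List.cons.injEq, and_true]
            rw [g_apply_lt _ _ 0 (by omega), g_apply_lt _ _ 1 (by omega)]
            decide⟩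
        · exact ⟨g sB 1, by simp, by
            simp only [List.map_cons, List.map_nil, List.cons.injEq, and_true]
            rw [g_apply_lt _ _ 0 (by omega), g_apply_lt _ _ 1 (by omega)]
            decide⟩
        · exact ⟨g sB 1, by simp, by
            simp only [List.map_cons, List.map_nil, List.cons.injEq, and_true]
            rw [g_apply_lt _ _ 0 (by omega), g_apply_lt _ _ 1 (by omega)]
            decide⟩
        · exact ⟨g sA 0, by simp, by
            simp only [List.map_cons, List.map_nil, List.cons.injEq, and_true]
            rw [g_apply_lt _ _ 0 (by omega), g_apply_lt _ _ 1 (by omega)]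
            decide⟩
        · exact ⟨g sA 0, by simp, by
            simp only [List.map_cons, List.map_nil, List.cons.injEq, and_true]
            rw [g_apply_lt _ _ 0 (by omega), g_apply_lt _ _ 1 (by omega)]
            decide⟩
      · -- w ⊆ v on Z
        intro t ht
        rcases ht with rfl | rfl | rfl | rfl
        · exact ⟨g sB 0, by simp, by
            simp only [List.map_cons, List.map_nil, List.cons.injEq, and_true]
            rw [g_apply_lt _ _ 2 (by omega), g_apply_lt _ _ 1 (by omega)]
            decide⟩
        · exact ⟨g sB 0, by simp, by
            simp only [List.map_cons, List.map_nil, List.cons.injEq, and_true]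
            rw [g_apply_lt _ _ 2 (by omega), g_apply_lt _ _ 1 (by omega)]
            decide⟩
        · exact ⟨g sB 0, by simp, by
            simp only [List.map_cons, List.map_nil, List.cons.injEq, and_true]
            rw [g_apply_lt _ _ 2 (by omega), g_apply_lt _ _ 1 (by omega)]
            decide⟩
        · exact ⟨g sC 0, by simp, by
            simp only [List.map_cons, List.map_nil, List.cons.injEq, and_true]
            rw [g_apply_lt _ _ 2 (by omega), g_apply_lt _ _ 1 (by omega)]
            decide⟩
  · -- failure of u ⊆ v ∨ w ⊆ v under strict semantics
    intro h
    simp only [strictSat] at h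
    obtain ⟨Y, Z, hU, hD, hY, hZ⟩ := h
    have hYsub : Y ⊆ exTeam' := hU ▸ Set.subset_union_left
    have hZsub : Z ⊆ exTeam' := hU ▸ Set.subset_union_right
    have eval : ∀ s : Fin 3 → Fin 3, ∀ n : ℕ, (hn : n < 3) →
        e s n = some (s ⟨n, hn⟩) := by
      intro s n hn; simp [e, hn]
    have hCY : e sC ∉ Y := by
      intro h
      obtain ⟨t, htY, ht⟩ := hY (e sC) h
      simp only [List.map_cons, List.map_nil, List.cons.injEq, and_true] at ht
      rw [eval sC 0 (by omega)] at ht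
      rcases (exTeam'_eq ▸ hYsub htY : t ∈ _) with rfl | rfl | rfl <;>
        rw [eval _ 1 (by omega)] at ht <;> exact absurd ht (by decide)
    have hCZ : e sC ∈ Z := by
      have : e sC ∈ Y ∪ Z := by
        rw [hU, exTeam'_eq]; exact Or.inr (Or.inr rfl)
      exact this.resolve_left hCY
    have hBZ : e sB ∈ Z := by
      obtain ⟨t, htZ, ht⟩ := hZ (e sC) hCZ
      simp only [List.map_cons, List.map_nil, List.cons.injEq, and_true] at ht
      rw [eval sC 2 (by omega)] at ht
      rcases (exTeam'_eq ▸ hZsub htZ : t ∈ _) with rfl | rfl | rfl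
      · rw [eval _ 1 (by omega)] at ht; exact absurd ht (by decide)
      · exact htZ
      · rw [eval _ 1 (by omega)] at ht; exact absurd ht (by decide)
    have hBY : e sB ∉ Y := fun h => by
      have : e sB ∈ Y ∩ Z := ⟨h, hBZ⟩
      rw [hD] at this
      exact this
    have hA : e sA ∈ Y ∪ Z := by
      rw [hU, exTeam'_eq]; exact Or.inl rfl
    rcases hA with hAY | hAZ
    · obtain ⟨t, htY, ht⟩ := hY (e sA) hAY
      simp only [List.map_cons, List.map_nil, List.cons.injEq, and_true] at ht
      rw [eval sA 0 (by omega)] at ht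
      rcases (exTeam'_eq ▸ hYsub htY : t ∈ _) with rfl | rfl | rfl
      · rw [eval _ 1 (by omega)] at ht; exact absurd ht (by decide)
      · exact hBY htY
      · exact hCY htY
    · obtain ⟨t, htZ, ht⟩ := hZ (e sA) hAZ
      simp only [List.map_cons, List.map_nil, List.cons.injEq, and_true] at ht
      rw [eval sA 2 (by omega)] at ht
      rcases (exTeam'_eq ▸ hZsub htZ : t ∈ _) with rfl | rfl | rfl <;>
        rw [eval _ 1 (by omega)] at ht <;> exact absurd ht (by decide)

end TeamSem
end

section
/- For every sentence ψ ∈ FO(=(…), ⊆)(k∀) (i.e., allowing dependence and inclusion atoms but no independence atoms) there is a sentence τ_ψ ∈ ESO_f(k∀) such that for all structures A with at least two elements: A ⊨ ψ under strict team semantics if and only if A ⊨ τ_ψ. -/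
open FirstOrder FirstOrder.Language FirstOrder.Language.Structure

namespace TeamSem

/-- Terms of the language `L` extended with function symbols from `F` (where `f : F`
has arity `ar f`), with first-order variables in `ℕ`. -/
inductive ETerm (L : FirstOrder.Language.{u, v}) (F : Type) (ar : F → ℕ) :
    Type (max u v) where
  | var : ℕ → ETerm L F ar
  | func : {n : ℕ} → L.Functions n → (Fin n → ETerm L F ar) → ETerm L F ar
  | efunc : (f : F) → (Fin (ar f) → ETerm L F ar) → ETerm L F ar

/-- Quantifier-free first-order formulas over `L` extended with function symbols
from `F`. -/
inductive EQF (L : FirstOrder.Language.{u, v}) (F : Type) (ar : F → ℕ) :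
    Type (max u v) where
  | rel : {n : ℕ} → L.Relations n → (Fin n → ETerm L F ar) → EQF L F ar
  | nrel : {n : ℕ} → L.Relations n → (Fin n → ETerm L F ar) → EQF L F ar
  | teq : ETerm L F ar → ETerm L F ar → EQF L F ar
  | tne : ETerm L F ar → ETerm L F ar → EQF L F ar
  | and : EQF L F ar → EQF L F ar → EQF L F ar
  | or : EQF L F ar → EQF L F ar → EQF L F ar

variable {L : FirstOrder.Language.{u, v}} {F : Type} {ar : F → ℕ}

/-- Realization of an extended term, given interpretations `fi` of the extra
function symbols and an assignment `s` of the variables. -/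
def ETerm.realize {M : Type w} [L.Structure M]
    (fi : ∀ f : F, (Fin (ar f) → M) → M) (s : ℕ → M) : ETerm L F ar → M
  | .var n => s n
  | .func g ts => funMap g fun i => (ts i).realize fi s
  | .efunc f ts => fi f fun i => (ts i).realize fi s

/-- Realization of a quantifier-free extended formula. -/
def EQF.realize {M : Type w} [L.Structure M]
    (fi : ∀ f : F, (Fin (ar f) → M) → M) (s : ℕ → M) : EQF L F ar → Prop
  | .rel R ts => RelMap R fun i => (ts i).realize fi s
  | .nrel R ts => ¬ RelMap R fun i => (ts i).realize fi s
  | .teq t u => t.realize fi s = u.realize fi s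
  | .tne t u => t.realize fi s ≠ u.realize fi s
  | .and φ ψ => φ.realize fi s ∧ ψ.realize fi s
  | .or φ ψ => φ.realize fi s ∨ ψ.realize fi s

/-- All variables occurring in the term are among `x₀, …, x_{r-1}`. -/
def ETerm.varsLT (r : ℕ) : ETerm L F ar → Prop
  | .var n => n < r
  | .func _ ts => ∀ i, (ts i).varsLT r
  | .efunc _ ts => ∀ i, (ts i).varsLT r

/-- All variables occurring in the formula are among `x₀, …, x_{r-1}`. -/
def EQF.varsLT (r : ℕ) : EQF L F ar → Prop
  | .rel _ ts => ∀ i, (ts i).varsLT r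
  | .nrel _ ts => ∀ i, (ts i).varsLT r
  | .teq t u => t.varsLT r ∧ u.varsLT r
  | .tne t u => t.varsLT r ∧ u.varsLT r
  | .and φ ψ => φ.varsLT r ∧ ψ.varsLT r
  | .or φ ψ => φ.varsLT r ∧ ψ.varsLT r

/-- Truth of the `ESO_f` sentence `∃f₁…∃fₙ ∀x₁…∀x_r θ` in `M`: there are
interpretations of the function symbols such that `θ` holds under every assignment
of the universally quantified variables. -/
def esoTrue (M : Type w) [L.Structure M] (θ : EQF L F ar) : Prop :=
  ∃ fi : ∀ f : F, (Fin (ar f) → M) → M, ∀ s : ℕ → M, θ.realize fi s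

end TeamSem

namespace TeamSem

open FirstOrder FirstOrder.Language FirstOrder.Language.Structure

universe u v w

variable {L : FirstOrder.Language.{u, v}}

/-- An interpretation of extra function symbols. -/
abbrev Interp (F : Type) (ar : F → ℕ) (M : Type w) := ∀ f : F, (Fin (ar f) → M) → M

/-- Renaming of function symbols in a term (arity preserving). -/
def ETerm.mapF {F₁ F₂ : Type} {ar₁ : F₁ → ℕ} {ar₂ : F₂ → ℕ} (h : F₁ → F₂)
    (hc : ∀ f, ar₂ (h f) = ar₁ f) : ETerm L F₁ ar₁ → ETerm L F₂ ar₂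
  | .var n => .var n
  | .func g ts => .func g fun i => (ts i).mapF h hc
  | .efunc f ts => .efunc (h f) fun i => (ts (Fin.cast (hc f) i)).mapF h hc

/-- Pull back an interpretation along a symbol renaming. -/
def pullInterp {F₁ F₂ : Type} {ar₁ : F₁ → ℕ} {ar₂ : F₂ → ℕ} {M : Type w}
    (h : F₁ → F₂) (hc : ∀ f, ar₂ (h f) = ar₁ f) (fi : Interp F₂ ar₂ M) :
    Interp F₁ ar₁ M :=
  fun f w => fi (h f) fun i => w (Fin.cast (hc f) i)

lemma ETerm.realize_mapF {F₁ F₂ : Type} {ar₁ : F₁ → ℕ} {ar₂ : F₂ → ℕ}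
    {M : Type w} [L.Structure M] (h : F₁ → F₂) (hc : ∀ f, ar₂ (h f) = ar₁ f)
    (fi : Interp F₂ ar₂ M) (s : ℕ → M) :
    ∀ t : ETerm L F₁ ar₁, (t.mapF h hc).realize fi s = t.realize (pullInterp h hc fi) s
  | .var n => rfl
  | .func g ts => by
      simp only [ETerm.mapF, ETerm.realize]
      congr 1; funext i; exact realize_mapF h hc fi s (ts i)
  | .efunc f ts => by
      simp only [ETerm.mapF, ETerm.realize, pullInterp]
      congr 1; funext i; exact realize_mapF h hc fi s _

/-- Renaming of function symbols in a formula. -/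
def EQF.mapF {F₁ F₂ : Type} {ar₁ : F₁ → ℕ} {ar₂ : F₂ → ℕ} (h : F₁ → F₂)
    (hc : ∀ f, ar₂ (h f) = ar₁ f) : EQF L F₁ ar₁ → EQF L F₂ ar₂
  | .rel R ts => .rel R fun i => (ts i).mapF h hc
  | .nrel R ts => .nrel R fun i => (ts i).mapF h hc
  | .teq t u => .teq (t.mapF h hc) (u.mapF h hc)
  | .tne t u => .tne (t.mapF h hc) (u.mapF h hc)
  | .and φ ψ => .and (φ.mapF h hc) (ψ.mapF h hc)
  | .or φ ψ => .or (φ.mapF h hc) (ψ.mapF h hc)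

lemma EQF.realize_mapF {F₁ F₂ : Type} {ar₁ : F₁ → ℕ} {ar₂ : F₂ → ℕ}
    {M : Type w} [L.Structure M] (h : F₁ → F₂) (hc : ∀ f, ar₂ (h f) = ar₁ f)
    (fi : Interp F₂ ar₂ M) (s : ℕ → M) :
    ∀ θ : EQF L F₁ ar₁, ((θ.mapF h hc).realize fi s ↔ θ.realize (pullInterp h hc fi) s)
  | .rel R ts => by
      simp only [EQF.mapF, EQF.realize, ETerm.realize_mapF]
  | .nrel R ts => by
      simp only [EQF.mapF, EQF.realize, ETerm.realize_mapF]
  | .teq t u => by simp only [EQF.mapF, EQF.realize, ETerm.realize_mapF]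
  | .tne t u => by simp only [EQF.mapF, EQF.realize, ETerm.realize_mapF]
  | .and φ ψ => by
      simp only [EQF.mapF, EQF.realize]
      exact and_congr (realize_mapF h hc fi s φ) (realize_mapF h hc fi s ψ)
  | .or φ ψ => by
      simp only [EQF.mapF, EQF.realize]
      exact or_congr (realize_mapF h hc fi s φ) (realize_mapF h hc fi s ψ)

lemma ETerm.varsLT_mapF {F₁ F₂ : Type} {ar₁ : F₁ → ℕ} {ar₂ : F₂ → ℕ} (h : F₁ → F₂)
    (hc : ∀ f, ar₂ (h f) = ar₁ f) {j : ℕ} :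
    ∀ t : ETerm L F₁ ar₁, t.varsLT j → (t.mapF h hc).varsLT j
  | .var n, ht => ht
  | .func g ts, ht => fun i => varsLT_mapF h hc (ts i) (ht i)
  | .efunc f ts, ht => fun i => varsLT_mapF h hc _ (ht _)

lemma EQF.varsLT_mapF {F₁ F₂ : Type} {ar₁ : F₁ → ℕ} {ar₂ : F₂ → ℕ} (h : F₁ → F₂)
    (hc : ∀ f, ar₂ (h f) = ar₁ f) {j : ℕ} :
    ∀ θ : EQF L F₁ ar₁, θ.varsLT j → (θ.mapF h hc).varsLT j
  | .rel R ts, ht => fun i => (ts i).varsLT_mapF h hc (ht i)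
  | .nrel R ts, ht => fun i => (ts i).varsLT_mapF h hc (ht i)
  | .teq t u, ht => ⟨t.varsLT_mapF h hc ht.1, u.varsLT_mapF h hc ht.2⟩
  | .tne t u, ht => ⟨t.varsLT_mapF h hc ht.1, u.varsLT_mapF h hc ht.2⟩
  | .and φ ψ, ht => ⟨φ.varsLT_mapF h hc ht.1, ψ.varsLT_mapF h hc ht.2⟩
  | .or φ ψ, ht => ⟨φ.varsLT_mapF h hc ht.1, ψ.varsLT_mapF h hc ht.2⟩

lemma ETerm.varsLT_mono {F : Type} {ar : F → ℕ} {j j' : ℕ} (hj : j ≤ j') :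
    ∀ t : ETerm L F ar, t.varsLT j → t.varsLT j'
  | .var n, ht => lt_of_lt_of_le ht hj
  | .func g ts, ht => fun i => varsLT_mono hj (ts i) (ht i)
  | .efunc f ts, ht => fun i => varsLT_mono hj (ts i) (ht i)

lemma EQF.varsLT_mono {F : Type} {ar : F → ℕ} {j j' : ℕ} (hj : j ≤ j') :
    ∀ θ : EQF L F ar, θ.varsLT j → θ.varsLT j'
  | .rel R ts, ht => fun i => (ts i).varsLT_mono hj (ht i)
  | .nrel R ts, ht => fun i => (ts i).varsLT_mono hj (ht i)
  | .teq t u, ht => ⟨t.varsLT_mono hj ht.1, u.varsLT_mono hj ht.2⟩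
  | .tne t u, ht => ⟨t.varsLT_mono hj ht.1, u.varsLT_mono hj ht.2⟩
  | .and φ ψ, ht => ⟨φ.varsLT_mono hj ht.1, ψ.varsLT_mono hj ht.2⟩
  | .or φ ψ, ht => ⟨φ.varsLT_mono hj ht.1, ψ.varsLT_mono hj ht.2⟩

/-- Negation of a quantifier-free formula (in NNF). -/
def EQF.not {F : Type} {ar : F → ℕ} : EQF L F ar → EQF L F ar
  | .rel R ts => .nrel R ts
  | .nrel R ts => .rel R ts
  | .teq t u => .tne t u
  | .tne t u => .teq t u
  | .and φ ψ => .or φ.not ψ.not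
  | .or φ ψ => .and φ.not ψ.not

lemma EQF.realize_not {F : Type} {ar : F → ℕ} {M : Type w} [L.Structure M]
    (fi : Interp F ar M) (s : ℕ → M) :
    ∀ θ : EQF L F ar, (θ.not.realize fi s ↔ ¬ θ.realize fi s)
  | .rel R ts => Iff.rfl
  | .nrel R ts => not_not.symm
  | .teq t u => Iff.rfl
  | .tne t u => not_not.symm
  | .and φ ψ => by
      simp only [EQF.not, EQF.realize, realize_not fi s φ, realize_not fi s ψ]
      tauto
  | .or φ ψ => by
      simp only [EQF.not, EQF.realize, realize_not fi s φ, realize_not fi s ψ]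
      tauto

lemma EQF.varsLT_not {F : Type} {ar : F → ℕ} {j : ℕ} :
    ∀ θ : EQF L F ar, θ.varsLT j → θ.not.varsLT j
  | .rel R ts, ht => ht
  | .nrel R ts, ht => ht
  | .teq t u, ht => ht
  | .tne t u, ht => ht
  | .and φ ψ, ht => ⟨φ.varsLT_not ht.1, ψ.varsLT_not ht.2⟩
  | .or φ ψ, ht => ⟨φ.varsLT_not ht.1, ψ.varsLT_not ht.2⟩

/-- Substitution of terms for variables. -/
def ETerm.vsub {F : Type} {ar : F → ℕ} (σ : ℕ → ETerm L F ar) :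
    ETerm L F ar → ETerm L F ar
  | .var n => σ n
  | .func g ts => .func g fun i => (ts i).vsub σ
  | .efunc f ts => .efunc f fun i => (ts i).vsub σ

def EQF.vsub {F : Type} {ar : F → ℕ} (σ : ℕ → ETerm L F ar) :
    EQF L F ar → EQF L F ar
  | .rel R ts => .rel R fun i => (ts i).vsub σ
  | .nrel R ts => .nrel R fun i => (ts i).vsub σ
  | .teq t u => .teq (t.vsub σ) (u.vsub σ)
  | .tne t u => .tne (t.vsub σ) (u.vsub σ)
  | .and φ ψ => .and (φ.vsub σ) (ψ.vsub σ)
  | .or φ ψ => .or (φ.vsub σ) (ψ.vsub σ)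

lemma ETerm.realize_vsub {F : Type} {ar : F → ℕ} {M : Type w} [L.Structure M]
    (fi : Interp F ar M) (s : ℕ → M) (σ : ℕ → ETerm L F ar) :
    ∀ t : ETerm L F ar, (t.vsub σ).realize fi s = t.realize fi (fun n => (σ n).realize fi s)
  | .var n => rfl
  | .func g ts => by
      simp only [ETerm.vsub, ETerm.realize]
      congr 1; funext i; exact realize_vsub fi s σ (ts i)
  | .efunc f ts => by
      simp only [ETerm.vsub, ETerm.realize]
      congr 1; funext i; exact realize_vsub fi s σ (ts i)

lemma EQF.realize_vsub {F : Type} {ar : F → ℕ} {M : Type w} [L.Structure M]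
    (fi : Interp F ar M) (s : ℕ → M) (σ : ℕ → ETerm L F ar) :
    ∀ θ : EQF L F ar,
      ((θ.vsub σ).realize fi s ↔ θ.realize fi (fun n => (σ n).realize fi s))
  | .rel R ts => by simp only [EQF.vsub, EQF.realize, ETerm.realize_vsub]
  | .nrel R ts => by simp only [EQF.vsub, EQF.realize, ETerm.realize_vsub]
  | .teq t u => by simp only [EQF.vsub, EQF.realize, ETerm.realize_vsub]
  | .tne t u => by simp only [EQF.vsub, EQF.realize, ETerm.realize_vsub]
  | .and φ ψ => by
      simp only [EQF.vsub, EQF.realize]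
      exact and_congr (realize_vsub fi s σ φ) (realize_vsub fi s σ ψ)
  | .or φ ψ => by
      simp only [EQF.vsub, EQF.realize]
      exact or_congr (realize_vsub fi s σ φ) (realize_vsub fi s σ ψ)

lemma ETerm.varsLT_vsub {F : Type} {ar : F → ℕ} {σ : ℕ → ETerm L F ar} {j j' : ℕ}
    (hσ : ∀ n < j, (σ n).varsLT j') :
    ∀ t : ETerm L F ar, t.varsLT j → (t.vsub σ).varsLT j'
  | .var n, ht => hσ n ht
  | .func g ts, ht => fun i => varsLT_vsub hσ (ts i) (ht i)
  | .efunc f ts, ht => fun i => varsLT_vsub hσ (ts i) (ht i)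

lemma EQF.varsLT_vsub {F : Type} {ar : F → ℕ} {σ : ℕ → ETerm L F ar} {j j' : ℕ}
    (hσ : ∀ n < j, (σ n).varsLT j') :
    ∀ θ : EQF L F ar, θ.varsLT j → (θ.vsub σ).varsLT j'
  | .rel R ts, ht => fun i => (ts i).varsLT_vsub hσ (ht i)
  | .nrel R ts, ht => fun i => (ts i).varsLT_vsub hσ (ht i)
  | .teq t u, ht => ⟨t.varsLT_vsub hσ ht.1, u.varsLT_vsub hσ ht.2⟩
  | .tne t u, ht => ⟨t.varsLT_vsub hσ ht.1, u.varsLT_vsub hσ ht.2⟩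
  | .and φ ψ, ht => ⟨φ.varsLT_vsub hσ ht.1, ψ.varsLT_vsub hσ ht.2⟩
  | .or φ ψ, ht => ⟨φ.varsLT_vsub hσ ht.1, ψ.varsLT_vsub hσ ht.2⟩

lemma ETerm.realize_congr_lt {F : Type} {ar : F → ℕ} {M : Type w} [L.Structure M]
    (fi : Interp F ar M) {s s' : ℕ → M} {j : ℕ} (hs : ∀ n < j, s n = s' n) :
    ∀ t : ETerm L F ar, t.varsLT j → t.realize fi s = t.realize fi s'
  | .var n, ht => hs n ht
  | .func g ts, ht => by
      simp only [ETerm.realize]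
      congr 1; funext i; exact realize_congr_lt fi hs (ts i) (ht i)
  | .efunc f ts, ht => by
      simp only [ETerm.realize]
      congr 1; funext i; exact realize_congr_lt fi hs (ts i) (ht i)

lemma EQF.realize_congr_lt {F : Type} {ar : F → ℕ} {M : Type w} [L.Structure M]
    (fi : Interp F ar M) {s s' : ℕ → M} {j : ℕ} (hs : ∀ n < j, s n = s' n) :
    ∀ θ : EQF L F ar, θ.varsLT j → (θ.realize fi s ↔ θ.realize fi s')
  | .rel R ts, ht => by
      simp only [EQF.realize]
      rw [show (fun i => (ts i).realize fi s) = fun i => (ts i).realize fi s' from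
        funext fun i => (ts i).realize_congr_lt fi hs (ht i)]
  | .nrel R ts, ht => by
      simp only [EQF.realize]
      rw [show (fun i => (ts i).realize fi s) = fun i => (ts i).realize fi s' from
        funext fun i => (ts i).realize_congr_lt fi hs (ht i)]
  | .teq t u, ht => by
      simp only [EQF.realize, t.realize_congr_lt fi hs ht.1, u.realize_congr_lt fi hs ht.2]
  | .tne t u, ht => by
      simp only [EQF.realize, t.realize_congr_lt fi hs ht.1, u.realize_congr_lt fi hs ht.2]
  | .and φ ψ, ht =>
      and_congr (φ.realize_congr_lt fi hs ht.1) (ψ.realize_congr_lt fi hs ht.2)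
  | .or φ ψ, ht =>
      or_congr (φ.realize_congr_lt fi hs ht.1) (ψ.realize_congr_lt fi hs ht.2)

end TeamSem

namespace TeamSem

open FirstOrder FirstOrder.Language FirstOrder.Language.Structure

universe u v w

variable {L : FirstOrder.Language.{u, v}}

/-- Combine interpretations on a sum of symbol types. -/
def sumInterp {F₀ F₁ : Type} {ar₀ : F₀ → ℕ} {ar₁ : F₁ → ℕ} {M : Type w}
    (fi₀ : Interp F₀ ar₀ M) (fi₁ : Interp F₁ ar₁ M) :
    Interp (F₀ ⊕ F₁) (Sum.elim ar₀ ar₁) M :=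
  fun f => match f with
  | .inl g => fi₀ g
  | .inr g => fi₁ g

/-- Lift a term to a larger symbol type. -/
def ETerm.inlF {F₀ F₁ : Type} {ar₀ : F₀ → ℕ} {ar₁ : F₁ → ℕ} (t : ETerm L F₀ ar₀) :
    ETerm L (F₀ ⊕ F₁) (Sum.elim ar₀ ar₁) :=
  t.mapF Sum.inl (fun _ => rfl)

def EQF.inlF {F₀ F₁ : Type} {ar₀ : F₀ → ℕ} {ar₁ : F₁ → ℕ} (θ : EQF L F₀ ar₀) :
    EQF L (F₀ ⊕ F₁) (Sum.elim ar₀ ar₁) :=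
  θ.mapF Sum.inl (fun _ => rfl)

lemma pullInterp_inl {F₀ F₁ : Type} {ar₀ : F₀ → ℕ} {ar₁ : F₁ → ℕ} {M : Type w}
    (fi₀ : Interp F₀ ar₀ M) (fi₁ : Interp F₁ ar₁ M) :
    pullInterp (ar₁ := ar₀) Sum.inl (fun _ => rfl) (sumInterp fi₀ fi₁) = fi₀ := rfl

lemma ETerm.realize_inlF {F₀ F₁ : Type} {ar₀ : F₀ → ℕ} {ar₁ : F₁ → ℕ}
    {M : Type w} [L.Structure M] (fi₀ : Interp F₀ ar₀ M) (fi₁ : Interp F₁ ar₁ M)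
    (s : ℕ → M) (t : ETerm L F₀ ar₀) :
    (t.inlF (F₁ := F₁) (ar₁ := ar₁)).realize (sumInterp fi₀ fi₁) s = t.realize fi₀ s := by
  exact ETerm.realize_mapF (ar₁ := ar₀) Sum.inl (fun _ => rfl) (sumInterp fi₀ fi₁) s t

lemma EQF.realize_inlF {F₀ F₁ : Type} {ar₀ : F₀ → ℕ} {ar₁ : F₁ → ℕ}
    {M : Type w} [L.Structure M] (fi₀ : Interp F₀ ar₀ M) (fi₁ : Interp F₁ ar₁ M)
    (s : ℕ → M) (θ : EQF L F₀ ar₀) :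
    ((θ.inlF (F₁ := F₁) (ar₁ := ar₁)).realize (sumInterp fi₀ fi₁) s ↔ θ.realize fi₀ s) := by
  exact EQF.realize_mapF (ar₁ := ar₀) Sum.inl (fun _ => rfl) (sumInterp fi₀ fi₁) s θ

/-- Substituting extended terms for the variables of a first-order term. -/
def tsubst {F : Type} {ar : F → ℕ} (T : ℕ → ETerm L F ar) : L.Term ℕ → ETerm L F ar
  | .var n => T n
  | .func g ts => .func g fun i => tsubst T (ts i)

lemma tsubst_varsLT {F : Type} {ar : F → ℕ} {T : ℕ → ETerm L F ar} {j : ℕ}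
    {V : List ℕ} (hT : ∀ x ∈ V, (T x).varsLT j) :
    ∀ t : L.Term ℕ, (∀ x ∈ tvars t, x ∈ V) → (tsubst T t).varsLT j
  | .var n, ht => hT n (ht n rfl)
  | .func g ts, ht => fun i => tsubst_varsLT hT (ts i) fun x hx =>
      ht x (Set.mem_iUnion.2 ⟨i, hx⟩)

/-- The partial assignment coded by a point `s`, via the value terms `T` on the
variables in `V`. -/
def mkPA (V : List ℕ) {F : Type} {ar : F → ℕ} (T : ℕ → ETerm L F ar) {M : Type w}
    [L.Structure M] (fi : Interp F ar M) (s : ℕ → M) : ℕ → Option M :=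
  fun x => if x ∈ V then some ((T x).realize fi s) else none

/-- The team coded by `V`, `T` and the domain description `δ`. -/
def team (V : List ℕ) {F : Type} {ar : F → ℕ} (T : ℕ → ETerm L F ar)
    (δ : EQF L F ar) {M : Type w} [L.Structure M] (fi : Interp F ar M) :
    Set (ℕ → Option M) :=
  {pa | ∃ s : ℕ → M, δ.realize fi s ∧ pa = mkPA V T fi s}

lemma oreal_tsubst {F : Type} {ar : F → ℕ} {M : Type w} [L.Structure M]
    (V : List ℕ) (T : ℕ → ETerm L F ar) (fi : Interp F ar M) (s : ℕ → M) :
    ∀ t : L.Term ℕ, (∀ x ∈ tvars t, x ∈ V) →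
      oreal (mkPA V T fi s) t = some ((tsubst T t).realize fi s)
  | .var n, ht => by
      simp only [oreal, mkPA, tsubst, if_pos (ht n rfl)]
  | .func g ts, ht => by
      have ih : ∀ i, oreal (mkPA V T fi s) (ts i) = some ((tsubst T (ts i)).realize fi s) :=
        fun i => oreal_tsubst V T fi s (ts i) fun x hx => ht x (Set.mem_iUnion.2 ⟨i, hx⟩)
      have hsome : ∀ i, (oreal (mkPA V T fi s) (ts i)).isSome := by
        intro i; rw [ih i]; rfl
      simp only [oreal, dif_pos hsome, tsubst, ETerm.realize, Option.some.injEq]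
      congr 1; funext i
      have := ih i
      rw [← Option.some_get (hsome i)] at this
      exact Option.some.inj this

/-- The values of the coding terms. -/
def vals (V : List ℕ) {F : Type} {ar : F → ℕ} (T : ℕ → ETerm L F ar) {M : Type w}
    [L.Structure M] (fi : Interp F ar M) (s : ℕ → M) : Fin V.length → M :=
  fun i => (T (V.get i)).realize fi s

lemma mkPA_eq_of_vals {F : Type} {ar : F → ℕ} {M : Type w} [L.Structure M]
    {V : List ℕ} {T : ℕ → ETerm L F ar} {fi : Interp F ar M} {s s' : ℕ → M}
    (h : vals V T fi s = vals V T fi s') : mkPA V T fi s = mkPA V T fi s' := by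
  funext x
  simp only [mkPA]
  by_cases hx : x ∈ V
  · obtain ⟨i, hi⟩ := List.mem_iff_get.1 hx
    have := congrFun h i
    simp only [vals, hi] at this
    simp [hx, this]
  · simp [hx]

lemma vals_eq_of_mkPA {F : Type} {ar : F → ℕ} {M : Type w} [L.Structure M]
    {V : List ℕ} {T : ℕ → ETerm L F ar} {fi : Interp F ar M} {s s' : ℕ → M}
    (h : mkPA V T fi s = mkPA V T fi s') : vals V T fi s = vals V T fi s' := by
  funext i
  have hx : V.get i ∈ V := V.get_mem i
  have := congrFun h (V.get i)
  simp only [mkPA, if_pos hx, Option.some.injEq] at this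
  exact this

/-- Factor a function through the vals map, by choice. -/
lemma exists_fun_factor {α β : Type*} {γ : Type*} [Nonempty γ] (D : α → Prop)
    (v : α → β) (G : α → γ)
    (resp : ∀ a a', D a → D a' → v a = v a' → G a = G a') :
    ∃ g : β → γ, ∀ a, D a → g (v a) = G a := by
  classical
  refine ⟨fun b => if h : ∃ a, D a ∧ v a = b then G h.choose else Classical.arbitrary γ, ?_⟩
  intro a ha
  have h : ∃ a', D a' ∧ v a' = v a := ⟨a, ha, rfl⟩
  simp only [dif_pos h]
  exact resp _ _ h.choose_spec.1 ha h.choose_spec.2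

/-- Extend an interpretation along an injective arity-preserving symbol map. -/
lemma exists_interp_ext {F₁ F₂ : Type} {ar₁ : F₁ → ℕ} {ar₂ : F₂ → ℕ} {M : Type w}
    [Nonempty M] (h : F₁ → F₂) (hinj : Function.Injective h)
    (hc : ∀ f, ar₂ (h f) = ar₁ f) (fi₁ : Interp F₁ ar₁ M) :
    ∃ fi₂ : Interp F₂ ar₂ M, pullInterp h hc fi₂ = fi₁ := by
  classical
  refine ⟨fun g w =>
    if hg : ∃ f, h f = g then
      fi₁ hg.choose (fun i => w (Fin.cast ((hc hg.choose).symm.trans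
        (congrArg ar₂ hg.choose_spec)) i))
    else Classical.arbitrary M, ?_⟩
  funext f w
  have hg : ∃ f', h f' = h f := ⟨f, rfl⟩
  simp only [pullInterp, dif_pos hg]
  have key : ∀ (c : F₁) (he : c = f) (w' : Fin (ar₁ c) → M),
      (∀ i : Fin (ar₁ c), w' i = w (Fin.cast (congrArg ar₁ he) i)) →
      fi₁ c w' = fi₁ f w := by
    rintro c rfl w' hw'
    refine congrArg _ (funext fun i => ?_)
    rw [hw']
    exact congrArg w (Fin.ext (by simp))
  exact key hg.choose (hinj hg.choose_spec) _ (fun i => congrArg w (Fin.ext (by simp)))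

/-- Conjunction of a base formula with a list of formulas. -/
def andAll {F : Type} {ar : F → ℕ} : EQF L F ar → List (EQF L F ar) → EQF L F ar
  | b, [] => b
  | b, e :: es => andAll (b.and e) es

lemma realize_andAll {F : Type} {ar : F → ℕ} {M : Type w} [L.Structure M]
    (fi : Interp F ar M) (s : ℕ → M) :
    ∀ (es : List (EQF L F ar)) (b : EQF L F ar),
      ((andAll b es).realize fi s ↔ b.realize fi s ∧ ∀ e ∈ es, e.realize fi s)
  | [], b => by simp [andAll]
  | e :: es, b => by
      rw [andAll, realize_andAll fi s es]
      simp only [EQF.realize, List.mem_cons]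
      constructor
      · rintro ⟨⟨hb, he⟩, hes⟩
        exact ⟨hb, by rintro e' (rfl | h); exact he; exact hes e' h⟩
      · rintro ⟨hb, hes⟩
        exact ⟨⟨hb, hes e (Or.inl rfl)⟩, fun e' h => hes e' (Or.inr h)⟩

lemma varsLT_andAll {F : Type} {ar : F → ℕ} {j : ℕ} :
    ∀ (es : List (EQF L F ar)) (b : EQF L F ar), b.varsLT j → (∀ e ∈ es, e.varsLT j) →
      (andAll b es).varsLT j
  | [], b, hb, _ => hb
  | e :: es, b, hb, hes => by
      rw [andAll]
      exact varsLT_andAll es _ ⟨hb, hes e (List.mem_cons_self)⟩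
        fun e' h => hes e' (List.mem_cons_of_mem _ h)

lemma map_eq_map_zip {α β γ : Type*} {f : α → γ} {g : β → γ} :
    ∀ {xs : List α} {ys : List β}, xs.length = ys.length →
      (xs.map f = ys.map g ↔ ∀ p ∈ xs.zip ys, f p.1 = g p.2)
  | [], [], _ => by simp
  | [], y :: ys, h => by simp at h
  | x :: xs, [], h => by simp at h
  | x :: xs, y :: ys, h => by
      simp only [List.map_cons, List.cons.injEq, List.zip_cons_cons, List.mem_cons]
      rw [map_eq_map_zip (by simpa using h)]
      constructor
      · rintro ⟨h1, h2⟩ p (rfl | hp); exact h1; exact h2 p hp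
      · intro hp
        exact ⟨hp (x, y) (Or.inl rfl), fun p h' => hp p (Or.inr h')⟩

end TeamSem

namespace TeamSem

open FirstOrder FirstOrder.Language FirstOrder.Language.Structure

universe u v w

variable {L : FirstOrder.Language.{u, v}}

lemma map_congr_mem {α β : Type*} {f g : α → β} :
    ∀ {l : List α}, (l.map f = l.map g ↔ ∀ a ∈ l, f a = g a)
  | [] => by simp
  | a :: l => by
      simp only [List.map_cons, List.cons.injEq, List.mem_cons, map_congr_mem]
      constructor
      · rintro ⟨h1, h2⟩ b (rfl | hb); exact h1; exact h2 b hb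
      · intro hb; exact ⟨hb a (Or.inl rfl), fun b h => hb b (Or.inr h)⟩

theorem key (φ : TF L) : ∀ (j : ℕ) (V : List ℕ) (F₀ : Type) (ar₀ : F₀ → ℕ)
    (T : ℕ → ETerm L F₀ ar₀) (δ : EQF L F₀ ar₀),
    ¬ hasIndep φ → (boundVars φ).Nodup →
    (∀ x ∈ boundVars φ, x ∉ V) → (∀ x ∈ freeVars φ, x ∈ V) →
    (∀ x ∈ V, (T x).varsLT j) → δ.varsLT j →
    ∃ (F₁ : Type) (_ : Fintype F₁) (ar₁ : F₁ → ℕ)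
      (θ : EQF L (F₀ ⊕ F₁) (Sum.elim ar₀ ar₁)),
      θ.varsLT (j + uCount φ) ∧
      ∀ (M : Type w) [L.Structure M], (∃ a b : M, a ≠ b) → ∀ fi₀ : Interp F₀ ar₀ M,
        (strictSat M (team V T δ fi₀) φ ↔
          ∃ fi₁ : Interp F₁ ar₁ M, ∀ s : ℕ → M,
            δ.realize fi₀ s → θ.realize (sumInterp fi₀ fi₁) s) := by
  induction φ with
  | rel R ts =>
    intro j V F₀ ar₀ T δ hni hnd hbV hfv hT hδ
    have hts : ∀ i, ∀ x ∈ tvars (ts i), x ∈ V := fun i x hx =>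
      hfv x (Set.mem_iUnion.2 ⟨i, hx⟩)
    refine ⟨PEmpty, inferInstance, fun _ => 0,
      EQF.inlF (.rel R fun i => tsubst T (ts i)), ?_, ?_⟩
    · exact EQF.varsLT_mapF _ _ _ fun i => tsubst_varsLT hT _ (hts i)
    · intro M _ h2 fi₀
      constructor
      · intro hs
        refine ⟨fun f => f.elim, fun s hδs => ?_⟩
        rw [EQF.realize_inlF]
        obtain ⟨vv, hv, hR⟩ := hs (mkPA V T fi₀ s) ⟨s, hδs, rfl⟩
        have hvi : vv = fun i => (tsubst T (ts i)).realize fi₀ s := by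
          funext i
          exact Option.some.inj ((hv i).symm.trans (oreal_tsubst V T fi₀ s (ts i) (hts i)))
        show RelMap R _
        rw [show (fun i => (tsubst T (ts i)).realize fi₀ s) = vv from hvi.symm]
        exact hR
      · rintro ⟨fi₁, hθ⟩ pa ⟨s, hδs, rfl⟩
        refine ⟨fun i => (tsubst T (ts i)).realize fi₀ s,
          fun i => oreal_tsubst V T fi₀ s (ts i) (hts i), ?_⟩
        have := hθ s hδs
        rwa [EQF.realize_inlF] at this
  | nrel R ts =>
    intro j V F₀ ar₀ T δ hni hnd hbV hfv hT hδ
    have hts : ∀ i, ∀ x ∈ tvars (ts i), x ∈ V := fun i x hx =>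
      hfv x (Set.mem_iUnion.2 ⟨i, hx⟩)
    refine ⟨PEmpty, inferInstance, fun _ => 0,
      EQF.inlF (.nrel R fun i => tsubst T (ts i)), ?_, ?_⟩
    · exact EQF.varsLT_mapF _ _ _ fun i => tsubst_varsLT hT _ (hts i)
    · intro M _ h2 fi₀
      constructor
      · intro hs
        refine ⟨fun f => f.elim, fun s hδs => ?_⟩
        rw [EQF.realize_inlF]
        obtain ⟨vv, hv, hR⟩ := hs (mkPA V T fi₀ s) ⟨s, hδs, rfl⟩
        have hvi : vv = fun i => (tsubst T (ts i)).realize fi₀ s := by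
          funext i
          exact Option.some.inj ((hv i).symm.trans (oreal_tsubst V T fi₀ s (ts i) (hts i)))
        show ¬ RelMap R _
        rw [show (fun i => (tsubst T (ts i)).realize fi₀ s) = vv from hvi.symm]
        exact hR
      · rintro ⟨fi₁, hθ⟩ pa ⟨s, hδs, rfl⟩
        refine ⟨fun i => (tsubst T (ts i)).realize fi₀ s,
          fun i => oreal_tsubst V T fi₀ s (ts i) (hts i), ?_⟩
        have := hθ s hδs
        rwa [EQF.realize_inlF] at this
  | teq t u =>
    intro j V F₀ ar₀ T δ hni hnd hbV hfv hT hδ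
    have ht : ∀ x ∈ tvars t, x ∈ V := fun x hx => hfv x (Or.inl hx)
    have hu : ∀ x ∈ tvars u, x ∈ V := fun x hx => hfv x (Or.inr hx)
    refine ⟨PEmpty, inferInstance, fun _ => 0,
      EQF.inlF (.teq (tsubst T t) (tsubst T u)), ?_, ?_⟩
    · exact EQF.varsLT_mapF _ _ _ ⟨tsubst_varsLT hT _ ht, tsubst_varsLT hT _ hu⟩
    · intro M _ h2 fi₀
      constructor
      · intro hs
        refine ⟨fun f => f.elim, fun s hδs => ?_⟩
        rw [EQF.realize_inlF]
        obtain ⟨a, ha1, ha2⟩ := hs (mkPA V T fi₀ s) ⟨s, hδs, rfl⟩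
        show (tsubst T t).realize fi₀ s = (tsubst T u).realize fi₀ s
        have e1 := Option.some.inj ((oreal_tsubst V T fi₀ s t ht).symm.trans ha1)
        have e2 := Option.some.inj ((oreal_tsubst V T fi₀ s u hu).symm.trans ha2)
        rw [e1, e2]
      · rintro ⟨fi₁, hθ⟩ pa ⟨s, hδs, rfl⟩
        have := hθ s hδs
        rw [EQF.realize_inlF] at this
        exact ⟨(tsubst T t).realize fi₀ s, oreal_tsubst V T fi₀ s t ht, by
          rw [oreal_tsubst V T fi₀ s u hu]; exact congrArg some this.symm⟩
  | tne t u =>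
    intro j V F₀ ar₀ T δ hni hnd hbV hfv hT hδ
    have ht : ∀ x ∈ tvars t, x ∈ V := fun x hx => hfv x (Or.inl hx)
    have hu : ∀ x ∈ tvars u, x ∈ V := fun x hx => hfv x (Or.inr hx)
    refine ⟨PEmpty, inferInstance, fun _ => 0,
      EQF.inlF (.tne (tsubst T t) (tsubst T u)), ?_, ?_⟩
    · exact EQF.varsLT_mapF _ _ _ ⟨tsubst_varsLT hT _ ht, tsubst_varsLT hT _ hu⟩
    · intro M _ h2 fi₀
      constructor
      · intro hs
        refine ⟨fun f => f.elim, fun s hδs => ?_⟩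
        rw [EQF.realize_inlF]
        obtain ⟨a, b, ha, hb, hab⟩ := hs (mkPA V T fi₀ s) ⟨s, hδs, rfl⟩
        show (tsubst T t).realize fi₀ s ≠ (tsubst T u).realize fi₀ s
        have e1 := Option.some.inj ((oreal_tsubst V T fi₀ s t ht).symm.trans ha)
        have e2 := Option.some.inj ((oreal_tsubst V T fi₀ s u hu).symm.trans hb)
        rw [e1, e2]; exact hab
      · rintro ⟨fi₁, hθ⟩ pa ⟨s, hδs, rfl⟩
        have := hθ s hδs
        rw [EQF.realize_inlF] at this
        exact ⟨(tsubst T t).realize fi₀ s, (tsubst T u).realize fi₀ s,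
          oreal_tsubst V T fi₀ s t ht, oreal_tsubst V T fi₀ s u hu, this⟩
  | dep xs y =>
    intro j V F₀ ar₀ T δ hni hnd hbV hfv hT hδ
    have hy : y ∈ V := hfv y (Or.inr rfl)
    have hxs : ∀ x ∈ xs, x ∈ V := fun x hx => hfv x (Or.inl hx)
    refine ⟨Unit, inferInstance, fun _ => xs.length,
      .teq (ETerm.inlF (T y)) (.efunc (Sum.inr ()) fun i => ETerm.inlF (T (xs.get i))),
      ⟨ETerm.varsLT_mapF _ _ _ (hT y hy),
        fun i => ETerm.varsLT_mapF _ _ _ (hT _ (hxs _ (xs.get_mem i)))⟩, ?_⟩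
    intro M _ h2 fi₀
    haveI : Nonempty M := ⟨h2.choose⟩
    constructor
    · intro hs
      have hresp : ∀ s s', δ.realize fi₀ s → δ.realize fi₀ s' →
          (fun i : Fin xs.length => (T (xs.get i)).realize fi₀ s)
            = (fun i : Fin xs.length => (T (xs.get i)).realize fi₀ s') →
          (T y).realize fi₀ s = (T y).realize fi₀ s' := by
        intro s s' hδs hδs' hvv
        have hmap : xs.map (mkPA V T fi₀ s) = xs.map (mkPA V T fi₀ s') := by
          rw [map_congr_mem]
          intro x hx
          obtain ⟨i, hi⟩ := List.mem_iff_get.1 hx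
          have := congrFun hvv i
          simp only [hi] at this
          simp only [mkPA, if_pos (hxs x hx), this]
        have := hs (mkPA V T fi₀ s) ⟨s, hδs, rfl⟩ (mkPA V T fi₀ s') ⟨s', hδs', rfl⟩ hmap
        simp only [mkPA, if_pos hy, Option.some.injEq] at this
        exact this
      obtain ⟨g, hg⟩ := exists_fun_factor (δ.realize fi₀)
        (fun s => (fun i : Fin xs.length => (T (xs.get i)).realize fi₀ s))
        (fun s => (T y).realize fi₀ s) hresp
      refine ⟨fun _ => g, fun s hδs => ?_⟩
      show (ETerm.inlF (T y)).realize _ s = _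
      simp only [ETerm.realize, ETerm.realize_inlF]
      exact (hg s hδs).symm
    · rintro ⟨fi₁, hθ⟩ pa ⟨s, hδs, rfl⟩ pa' ⟨s', hδs', rfl⟩ hmap
      have h1 := hθ s hδs
      have h2' := hθ s' hδs'
      simp only [EQF.realize, ETerm.realize, ETerm.realize_inlF] at h1 h2'
      have hvv : (fun i : Fin xs.length => (T (xs.get i)).realize fi₀ s)
          = fun i => (T (xs.get i)).realize fi₀ s' := by
        funext i
        have hx : xs.get i ∈ xs := xs.get_mem i
        have := map_congr_mem.1 hmap _ hx
        simp only [mkPA, if_pos (hxs _ hx), Option.some.injEq] at this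
        exact this
      simp only [mkPA, if_pos hy, Option.some.injEq]
      rw [h1, h2']
      exact congrArg _ hvv
  | indep xs ys zs =>
    intro j V F₀ ar₀ T δ hni
    exact absurd trivial hni
  | inc xs ys =>
    intro j V F₀ ar₀ T δ hni hnd hbV hfv hT hδ
    classical
    have hxs : ∀ x ∈ xs, x ∈ V := fun x hx => hfv x (List.mem_append_left _ hx)
    have hys : ∀ x ∈ ys, x ∈ V := fun x hx => hfv x (List.mem_append_right _ hx)
    by_cases hlen : xs.length = ys.length
    · set σ : ℕ → ETerm L (F₀ ⊕ Fin j) (Sum.elim ar₀ fun _ => j) :=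
        fun n => if h : n < j then .efunc (Sum.inr ⟨n, h⟩) (fun i => .var i.1) else .var n
        with hσdef
      have hσlt : ∀ n < j, (σ n).varsLT j := by
        intro n hn
        simp only [hσdef, dif_pos hn]
        exact fun i => i.2
      refine ⟨Fin j, inferInstance, fun _ => j,
        andAll ((EQF.inlF δ).vsub σ)
          ((xs.zip ys).map fun p => .teq (ETerm.inlF (T p.1)) ((ETerm.inlF (T p.2)).vsub σ)),
        ?_, ?_⟩
      · apply varsLT_andAll
        · exact EQF.varsLT_vsub hσlt _ (EQF.varsLT_mapF _ _ _ hδ)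
        · intro e he
          obtain ⟨p, hp, rfl⟩ := List.mem_map.1 he
          exact ⟨ETerm.varsLT_mapF _ _ _ (hT _ (hxs _ (List.of_mem_zip hp).1)),
            ETerm.varsLT_vsub hσlt _ (ETerm.varsLT_mapF _ _ _ (hT _ (hys _ (List.of_mem_zip hp).2)))⟩
      · intro M _ h2 fi₀
        haveI : Nonempty M := ⟨h2.choose⟩
        have hθiff : ∀ (fi₁ : Interp (Fin j) (fun _ => j) M) (s : ℕ → M),
            ((andAll ((EQF.inlF δ).vsub σ) ((xs.zip ys).map fun p =>
                EQF.teq (ETerm.inlF (T p.1)) ((ETerm.inlF (T p.2)).vsub σ))).realize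
              (sumInterp fi₀ fi₁) s ↔
            (δ.realize fi₀ (fun n => (σ n).realize (sumInterp fi₀ fi₁) s) ∧
             ∀ p ∈ xs.zip ys, (T p.1).realize fi₀ s
               = (T p.2).realize fi₀ (fun n => (σ n).realize (sumInterp fi₀ fi₁) s))) := by
          intro fi₁ s
          have hteq : ∀ p : ℕ × ℕ,
              ((EQF.teq (ETerm.inlF (T p.1)) ((ETerm.inlF (T p.2)).vsub σ)).realize
                (sumInterp fi₀ fi₁) s ↔
              ((T p.1).realize fi₀ s
                = (T p.2).realize fi₀ (fun n => (σ n).realize (sumInterp fi₀ fi₁) s))) := by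
            intro p
            show (_ = _) ↔ _
            rw [ETerm.realize_inlF, ETerm.realize_vsub, ETerm.realize_inlF]
          rw [realize_andAll]
          apply and_congr
          · rw [EQF.realize_vsub, EQF.realize_inlF]
          · constructor
            · intro h p hp
              exact (hteq p).1 (h _ (List.mem_map_of_mem hp))
            · intro h e he
              obtain ⟨p, hp, rfl⟩ := List.mem_map.1 he
              exact (hteq p).2 (h p hp)
        constructor
        · intro hs
          set ext : (Fin j → M) → (ℕ → M) :=
            fun w n => if h : n < j then w ⟨n, h⟩ else Classical.arbitrary M with hext
          set P : (Fin j → M) → Prop := fun w => ∃ s', δ.realize fi₀ s' ∧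
            xs.map (mkPA V T fi₀ (ext w)) = ys.map (mkPA V T fi₀ s') with hP
          set fi₁ : Interp (Fin j) (fun _ => j) M :=
            fun k w => if h : P w then h.choose k.1 else Classical.arbitrary M with hfi₁
          refine ⟨fi₁, fun s hδs => ?_⟩
          have hagree : ∀ n < j, ext (fun i : Fin j => s i.1) n = s n := by
            intro n hn; simp only [hext, dif_pos hn]
          have hδe : δ.realize fi₀ (ext (fun i : Fin j => s i.1)) :=
            (EQF.realize_congr_lt fi₀ (fun n hn => (hagree n hn).symm) δ hδ).1 hδs
          have hmkE : mkPA V T fi₀ (ext (fun i : Fin j => s i.1)) = mkPA V T fi₀ s := by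
            apply mkPA_eq_of_vals
            funext i
            exact ETerm.realize_congr_lt fi₀ hagree _ (hT _ (V.get_mem i))
          have hPw : P (fun i : Fin j => s i.1) := by
            obtain ⟨pa', ⟨s', hδs', rfl⟩, hmap⟩ := hs (mkPA V T fi₀ s) ⟨s, hδs, rfl⟩
            exact ⟨s', hδs', by rw [hmkE]; exact hmap⟩
          have hsstar : ∀ n, n < j → (σ n).realize (sumInterp fi₀ fi₁) s = hPw.choose n := by
            intro n hn
            simp only [hσdef, dif_pos hn]
            show fi₁ ⟨n, hn⟩ (fun i => s i.1) = _
            simp only [hfi₁, dif_pos hPw]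
          rw [hθiff]
          constructor
          · exact (EQF.realize_congr_lt fi₀ hsstar δ hδ).2 hPw.choose_spec.1
          · intro p hp
            have hmap := hPw.choose_spec.2
            have hpv0 := (map_eq_map_zip hlen).1 hmap p hp
            have hpv := (congrFun hmkE p.1).symm.trans hpv0
            simp only [mkPA, if_pos (hxs _ (List.of_mem_zip hp).1),
              if_pos (hys _ (List.of_mem_zip hp).2), Option.some.injEq] at hpv
            rw [hpv]
            exact (ETerm.realize_congr_lt fi₀ hsstar _ (hT _ (hys _ (List.of_mem_zip hp).2))).symm
        · rintro ⟨fi₁, hθ⟩ pa ⟨s, hδs, rfl⟩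
          have h := (hθiff fi₁ s).1 (hθ s hδs)
          refine ⟨mkPA V T fi₀ (fun n => (σ n).realize (sumInterp fi₀ fi₁) s),
            ⟨_, h.1, rfl⟩, ?_⟩
          rw [map_eq_map_zip hlen]
          intro p hp
          simp only [mkPA, if_pos (hxs _ (List.of_mem_zip hp).1),
            if_pos (hys _ (List.of_mem_zip hp).2), Option.some.injEq]
          exact h.2 p hp
    · refine ⟨Unit, inferInstance, fun _ => 0,
        .tne (.efunc (Sum.inr ()) (fun i => Fin.elim0 i))
          (.efunc (Sum.inr ()) (fun i => Fin.elim0 i)),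
        ⟨fun i => Fin.elim0 i, fun i => Fin.elim0 i⟩, ?_⟩
      intro M _ h2 fi₀
      constructor
      · intro hs
        refine ⟨fun _ _ => h2.choose, fun s hδs => ?_⟩
        exfalso
        obtain ⟨pa', ⟨s', hδs', rfl⟩, hmap⟩ := hs (mkPA V T fi₀ s) ⟨s, hδs, rfl⟩
        apply hlen
        have := congrArg List.length hmap
        simpa using this
      · rintro ⟨fi₁, hθ⟩ pa ⟨s, hδs, rfl⟩
        exact absurd rfl (hθ s hδs)
  | and φ₁ φ₂ ih₁ ih₂ =>
    intro j V F₀ ar₀ T δ hni hnd hbV hfv hT hδ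
    rw [show boundVars (.and φ₁ φ₂) = boundVars φ₁ ++ boundVars φ₂ from rfl,
      List.nodup_append] at hnd
    obtain ⟨F₁a, insta, ar₁a, θ₁, hv₁, hsem₁⟩ := ih₁ j V F₀ ar₀ T δ
      (fun h => hni (Or.inl h)) hnd.1
      (fun x hx => hbV x (List.mem_append_left _ hx))
      (fun x hx => hfv x (Or.inl hx)) hT hδ
    obtain ⟨F₁b, instb, ar₁b, θ₂, hv₂, hsem₂⟩ := ih₂ j V F₀ ar₀ T δ
      (fun h => hni (Or.inr h)) hnd.2.1
      (fun x hx => hbV x (List.mem_append_right _ hx))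
      (fun x hx => hfv x (Or.inr hx)) hT hδ
    haveI := insta; haveI := instb
    have hca : ∀ f : F₀ ⊕ F₁a,
        Sum.elim ar₀ (Sum.elim ar₁a ar₁b) ((Sum.map id Sum.inl : F₀ ⊕ F₁a → F₀ ⊕ (F₁a ⊕ F₁b)) f)
          = Sum.elim ar₀ ar₁a f := by rintro (f | f) <;> rfl
    have hcb : ∀ f : F₀ ⊕ F₁b,
        Sum.elim ar₀ (Sum.elim ar₁a ar₁b) ((Sum.map id Sum.inr : F₀ ⊕ F₁b → F₀ ⊕ (F₁a ⊕ F₁b)) f)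
          = Sum.elim ar₀ ar₁b f := by rintro (f | f) <;> rfl
    refine ⟨F₁a ⊕ F₁b, inferInstance, Sum.elim ar₁a ar₁b,
      .and (θ₁.mapF _ hca) (θ₂.mapF _ hcb), ?_, ?_⟩
    · exact ⟨EQF.varsLT_mapF _ _ _ (EQF.varsLT_mono (by simp only [uCount]; omega) _ hv₁),
        EQF.varsLT_mapF _ _ _ (EQF.varsLT_mono (by simp only [uCount]; omega) _ hv₂)⟩
    · intro M _ h2 fi₀
      constructor
      · rintro ⟨hA, hB⟩
        obtain ⟨fia, ha'⟩ := (hsem₁ M h2 fi₀).1 hA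
        obtain ⟨fib, hb'⟩ := (hsem₂ M h2 fi₀).1 hB
        refine ⟨sumInterp fia fib, fun s hδs => ⟨?_, ?_⟩⟩
        · rw [EQF.realize_mapF]
          have hpull : pullInterp _ hca (sumInterp fi₀ (sumInterp fia fib))
              = sumInterp fi₀ fia := by funext f; rcases f with f | f <;> rfl
          rw [hpull]; exact ha' s hδs
        · rw [EQF.realize_mapF]
          have hpull : pullInterp _ hcb (sumInterp fi₀ (sumInterp fia fib))
              = sumInterp fi₀ fib := by funext f; rcases f with f | f <;> rfl
          rw [hpull]; exact hb' s hδs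
      · rintro ⟨fi₁, hθ⟩
        constructor
        · refine (hsem₁ M h2 fi₀).2 ⟨fun f => fi₁ (Sum.inl f), fun s hδs => ?_⟩
          have := (hθ s hδs).1
          rw [EQF.realize_mapF] at this
          have hpull : pullInterp _ hca (sumInterp fi₀ fi₁)
              = sumInterp fi₀ (fun f => fi₁ (Sum.inl f)) := by
            funext f; rcases f with f | f <;> rfl
          rwa [hpull] at this
        · refine (hsem₂ M h2 fi₀).2 ⟨fun f => fi₁ (Sum.inr f), fun s hδs => ?_⟩
          have := (hθ s hδs).2
          rw [EQF.realize_mapF] at this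
          have hpull : pullInterp _ hcb (sumInterp fi₀ fi₁)
              = sumInterp fi₀ (fun f => fi₁ (Sum.inr f)) := by
            funext f; rcases f with f | f <;> rfl
          rwa [hpull] at this
  | or φ₁ φ₂ ih₁ ih₂ =>
    intro j V F₀ ar₀ T δ hni hnd hbV hfv hT hδ
    classical
    rw [show boundVars (.or φ₁ φ₂) = boundVars φ₁ ++ boundVars φ₂ from rfl,
      List.nodup_append] at hnd
    set TB : ℕ → ETerm L ((F₀ ⊕ Unit) ⊕ Unit) (Sum.elim (Sum.elim ar₀ fun _ => 0) (fun _ => V.length)) := fun x => ETerm.inlF (ETerm.inlF (T x)) with hTB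
    set cterm : ETerm L ((F₀ ⊕ Unit) ⊕ Unit) (Sum.elim (Sum.elim ar₀ fun _ => 0) (fun _ => V.length)) := .efunc (Sum.inl (Sum.inr ())) (fun i => Fin.elim0 i)
      with hcterm
    set gterm : ETerm L ((F₀ ⊕ Unit) ⊕ Unit) (Sum.elim (Sum.elim ar₀ fun _ => 0) (fun _ => V.length)) :=
      .efunc (Sum.inr ()) (fun i => ETerm.inlF (ETerm.inlF (T (V.get i)))) with hgterm
    set δB : EQF L ((F₀ ⊕ Unit) ⊕ Unit) (Sum.elim (Sum.elim ar₀ fun _ => 0) (fun _ => V.length)) := EQF.inlF (EQF.inlF δ) with hδB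
    have hTBlt : ∀ x ∈ V, (TB x).varsLT j :=
      fun x hx => ETerm.varsLT_mapF _ _ _ (ETerm.varsLT_mapF _ _ _ (hT x hx))
    have hgclt : gterm.varsLT j ∧ cterm.varsLT j :=
      ⟨fun i => ETerm.varsLT_mapF _ _ _ (ETerm.varsLT_mapF _ _ _ (hT _ (V.get_mem i))),
       fun i => Fin.elim0 i⟩
    have hδBlt : δB.varsLT j := EQF.varsLT_mapF _ _ _ (EQF.varsLT_mapF _ _ _ hδ)
    obtain ⟨F₁a, insta, ar₁a, θ₁, hv₁, hsem₁⟩ := ih₁ j V ((F₀ ⊕ Unit) ⊕ Unit) (Sum.elim (Sum.elim ar₀ fun _ => 0) (fun _ => V.length)) TB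
      (δB.and (.teq gterm cterm))
      (fun h => hni (Or.inl h)) hnd.1
      (fun x hx => hbV x (List.mem_append_left _ hx))
      (fun x hx => hfv x (Or.inl hx)) hTBlt ⟨hδBlt, hgclt.1, hgclt.2⟩
    obtain ⟨F₁b, instb, ar₁b, θ₂, hv₂, hsem₂⟩ := ih₂ j V ((F₀ ⊕ Unit) ⊕ Unit) (Sum.elim (Sum.elim ar₀ fun _ => 0) (fun _ => V.length)) TB
      (δB.and (.tne gterm cterm))
      (fun h => hni (Or.inr h)) hnd.2.1
      (fun x hx => hbV x (List.mem_append_right _ hx))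
      (fun x hx => hfv x (Or.inr hx)) hTBlt ⟨hδBlt, hgclt.1, hgclt.2⟩
    haveI := insta; haveI := instb
    set hBmap : ((F₀ ⊕ Unit) ⊕ Unit) → F₀ ⊕ ((Unit ⊕ Unit) ⊕ (F₁a ⊕ F₁b)) :=
      Sum.elim (Sum.elim Sum.inl (fun c => Sum.inr (Sum.inl (Sum.inl c))))
        (fun g => Sum.inr (Sum.inl (Sum.inr g))) with hBmapdef
    have hcB : ∀ f : ((F₀ ⊕ Unit) ⊕ Unit), Sum.elim ar₀ (Sum.elim (Sum.elim (fun _ => 0) (fun _ => V.length)) (Sum.elim ar₁a ar₁b)) (hBmap f) = (Sum.elim (Sum.elim ar₀ fun _ => 0) (fun _ => V.length)) f := by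
      rintro ((a | c) | g) <;> rfl
    set hamap : ((F₀ ⊕ Unit) ⊕ Unit) ⊕ F₁a → F₀ ⊕ ((Unit ⊕ Unit) ⊕ (F₁a ⊕ F₁b)) :=
      Sum.elim hBmap (fun q => Sum.inr (Sum.inr (Sum.inl q))) with hamapdef
    have hca : ∀ f : ((F₀ ⊕ Unit) ⊕ Unit) ⊕ F₁a, Sum.elim ar₀ (Sum.elim (Sum.elim (fun _ => 0) (fun _ => V.length)) (Sum.elim ar₁a ar₁b)) (hamap f) = Sum.elim (Sum.elim (Sum.elim ar₀ fun _ => 0) (fun _ => V.length)) ar₁a f := by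
      rintro (((a | c) | g) | q) <;> rfl
    set hbmap : ((F₀ ⊕ Unit) ⊕ Unit) ⊕ F₁b → F₀ ⊕ ((Unit ⊕ Unit) ⊕ (F₁a ⊕ F₁b)) :=
      Sum.elim hBmap (fun q => Sum.inr (Sum.inr (Sum.inr q))) with hbmapdef
    have hcb : ∀ f : ((F₀ ⊕ Unit) ⊕ Unit) ⊕ F₁b, Sum.elim ar₀ (Sum.elim (Sum.elim (fun _ => 0) (fun _ => V.length)) (Sum.elim ar₁a ar₁b)) (hbmap f) = Sum.elim (Sum.elim (Sum.elim ar₀ fun _ => 0) (fun _ => V.length)) ar₁b f := by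
      rintro (((a | c) | g) | q) <;> rfl
    refine ⟨((Unit ⊕ Unit) ⊕ (F₁a ⊕ F₁b)), inferInstance, (Sum.elim (Sum.elim (fun _ => 0) (fun _ => V.length)) (Sum.elim ar₁a ar₁b)),
      .and (.or ((EQF.tne gterm cterm).mapF hBmap hcB) (θ₁.mapF hamap hca))
           (.or ((EQF.teq gterm cterm).mapF hBmap hcB) (θ₂.mapF hbmap hcb)), ?_, ?_⟩
    · exact ⟨⟨EQF.varsLT_mapF _ _ _ ⟨ETerm.varsLT_mono (Nat.le_add_right _ _) _ hgclt.1,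
          ETerm.varsLT_mono (Nat.le_add_right _ _) _ hgclt.2⟩,
        EQF.varsLT_mapF _ _ _ (EQF.varsLT_mono (by simp only [uCount]; omega) _ hv₁)⟩,
        ⟨EQF.varsLT_mapF _ _ _ ⟨ETerm.varsLT_mono (Nat.le_add_right _ _) _ hgclt.1,
          ETerm.varsLT_mono (Nat.le_add_right _ _) _ hgclt.2⟩,
        EQF.varsLT_mapF _ _ _ (EQF.varsLT_mono (by simp only [uCount]; omega) _ hv₂)⟩⟩
    · intro M _ h2 fi₀
      obtain ⟨aa, bb, hab⟩ := id h2
      haveI : Nonempty M := ⟨aa⟩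
      have hmkB : ∀ (fic : Interp Unit (fun _ => 0) M)
          (fig : Interp Unit (fun _ => V.length) M) (s : ℕ → M),
          mkPA V TB (sumInterp (sumInterp fi₀ fic) fig) s = mkPA V T fi₀ s := by
        intro fic fig s
        funext x
        simp only [mkPA, hTB]
        by_cases h : x ∈ V
        · simp only [if_pos h, Option.some.injEq]
          rw [ETerm.realize_inlF, ETerm.realize_inlF]
        · simp only [if_neg h]
      have hgt : ∀ (fic : Interp Unit (fun _ => 0) M)
          (fig : Interp Unit (fun _ => V.length) M) (s : ℕ → M),
          gterm.realize (sumInterp (sumInterp fi₀ fic) fig) s = fig () (vals V T fi₀ s) := by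
        intro fic fig s
        show fig () _ = _
        exact congrArg _ (funext fun i => by rw [ETerm.realize_inlF, ETerm.realize_inlF]; rfl)
      have hct : ∀ (fic : Interp Unit (fun _ => 0) M)
          (fig : Interp Unit (fun _ => V.length) M) (s s' : ℕ → M),
          cterm.realize (sumInterp (sumInterp fi₀ fic) fig) s
            = cterm.realize (sumInterp (sumInterp fi₀ fic) fig) s' := by
        intro fic fig s s'
        show fic () _ = fic () _
        exact congrArg _ (funext fun i => Fin.elim0 i)
      have hδBr : ∀ (fic : Interp Unit (fun _ => 0) M)
          (fig : Interp Unit (fun _ => V.length) M) (s : ℕ → M),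
          (δB.realize (sumInterp (sumInterp fi₀ fic) fig) s ↔ δ.realize fi₀ s) := by
        intro fic fig s
        rw [hδB, EQF.realize_inlF, EQF.realize_inlF]
      constructor
      · rintro ⟨Y, Z, hYZ, hdisj, hsY, hsZ⟩
        set fic : Interp Unit (fun _ => 0) M := fun _ _ => aa with hfic
        obtain ⟨g, hg⟩ := exists_fun_factor (δ.realize fi₀) (vals V T fi₀)
          (fun s => if mkPA V T fi₀ s ∈ Y then aa else bb)
          (fun s s' _ _ hv => by
            show (if mkPA V T fi₀ s ∈ Y then aa else bb)
              = (if mkPA V T fi₀ s' ∈ Y then aa else bb)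
            rw [mkPA_eq_of_vals hv])
        set fig : Interp Unit (fun _ => V.length) M := fun _ => g with hfig
        set fiB : Interp ((F₀ ⊕ Unit) ⊕ Unit) (Sum.elim (Sum.elim ar₀ fun _ => 0) (fun _ => V.length)) M := sumInterp (sumInterp fi₀ fic) fig with hfiB
        have hctval : ∀ s : ℕ → M, cterm.realize fiB s = aa := fun s => rfl
        have hgtval : ∀ s : ℕ → M, gterm.realize fiB s = g (vals V T fi₀ s) :=
          fun s => hgt fic fig s
        have hYdesc : team V TB (δB.and (.teq gterm cterm)) fiB = Y := by
          ext pa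
          constructor
          · rintro ⟨s, ⟨hδs, hgc⟩, rfl⟩
            rw [hδBr] at hδs
            have hval : g (vals V T fi₀ s) = aa :=
              (hgtval s).symm.trans (hgc.trans (hctval s))
            rw [hg s hδs] at hval
            rw [hmkB]
            by_cases hy : mkPA V T fi₀ s ∈ Y
            · exact hy
            · rw [if_neg hy] at hval
              exact absurd hval (Ne.symm hab)
          · intro hy
            have hpaX : pa ∈ team V T δ fi₀ := by
              rw [← hYZ]; exact Or.inl hy
            obtain ⟨s, hδs, rfl⟩ := hpaX
            refine ⟨s, ⟨(hδBr fic fig s).2 hδs, ?_⟩, (hmkB fic fig s).symm⟩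
            show gterm.realize fiB s = cterm.realize fiB s
            rw [hgtval s, hctval s, hg s hδs, if_pos hy]
        have hZdesc : team V TB (δB.and (.tne gterm cterm)) fiB = Z := by
          ext pa
          constructor
          · rintro ⟨s, ⟨hδs, hgc⟩, rfl⟩
            rw [hδBr] at hδs
            have hval : g (vals V T fi₀ s) ≠ aa := by
              intro h
              exact hgc ((hgtval s).trans (h.trans (hctval s).symm))
            rw [hg s hδs] at hval
            rw [hmkB]
            have hX : mkPA V T fi₀ s ∈ Y ∪ Z := by
              rw [hYZ]; exact ⟨s, hδs, rfl⟩
            rcases hX with hy | hz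
            · rw [if_pos hy] at hval
              exact absurd rfl hval
            · exact hz
          · intro hz
            have hpaX : pa ∈ team V T δ fi₀ := by
              rw [← hYZ]; exact Or.inr hz
            obtain ⟨s, hδs, rfl⟩ := hpaX
            have hny : mkPA V T fi₀ s ∉ Y := by
              intro hy
              exact Set.eq_empty_iff_forall_notMem.1 hdisj _ ⟨hy, hz⟩
            refine ⟨s, ⟨(hδBr fic fig s).2 hδs, ?_⟩, (hmkB fic fig s).symm⟩
            show ¬ gterm.realize fiB s = cterm.realize fiB s
            rw [hgtval s, hctval s, hg s hδs, if_neg hny]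
            exact Ne.symm hab
        obtain ⟨fia, hfia⟩ := (hsem₁ M h2 fiB).1 (by rw [hYdesc]; exact hsY)
        obtain ⟨fib, hfib⟩ := (hsem₂ M h2 fiB).1 (by rw [hZdesc]; exact hsZ)
        refine ⟨sumInterp (sumInterp fic fig) (sumInterp fia fib), fun s hδs => ?_⟩
        have hpullB : pullInterp hBmap hcB
            (sumInterp fi₀ (sumInterp (sumInterp fic fig) (sumInterp fia fib))) = fiB := by
          funext f; rcases f with (f | f) | f <;> rfl
        have hpulla : pullInterp hamap hca
            (sumInterp fi₀ (sumInterp (sumInterp fic fig) (sumInterp fia fib)))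
            = sumInterp fiB fia := by
          funext f; rcases f with ((f | f) | f) | f <;> rfl
        have hpullb : pullInterp hbmap hcb
            (sumInterp fi₀ (sumInterp (sumInterp fic fig) (sumInterp fia fib)))
            = sumInterp fiB fib := by
          funext f; rcases f with ((f | f) | f) | f <;> rfl
        by_cases hgc : gterm.realize fiB s = cterm.realize fiB s
        · refine ⟨Or.inr ?_, Or.inl ?_⟩
          · rw [EQF.realize_mapF, hpulla]
            exact hfia s ⟨(hδBr fic fig s).2 hδs, hgc⟩
          · rw [EQF.realize_mapF, hpullB]
            exact hgc
        · refine ⟨Or.inl ?_, Or.inr ?_⟩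
          · rw [EQF.realize_mapF, hpullB]
            exact hgc
          · rw [EQF.realize_mapF, hpullb]
            exact hfib s ⟨(hδBr fic fig s).2 hδs, hgc⟩
      · rintro ⟨fi₁, hθ⟩
        set fic : Interp Unit (fun _ => 0) M := fun u => fi₁ (Sum.inl (Sum.inl u)) with hfic
        set fig : Interp Unit (fun _ => V.length) M := fun u => fi₁ (Sum.inl (Sum.inr u))
          with hfig
        set fia : Interp F₁a ar₁a M := fun q => fi₁ (Sum.inr (Sum.inl q)) with hfiadef
        set fib : Interp F₁b ar₁b M := fun q => fi₁ (Sum.inr (Sum.inr q)) with hfibdef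
        set fiB : Interp ((F₀ ⊕ Unit) ⊕ Unit) (Sum.elim (Sum.elim ar₀ fun _ => 0) (fun _ => V.length)) M := sumInterp (sumInterp fi₀ fic) fig with hfiB
        have hpullB : pullInterp hBmap hcB (sumInterp fi₀ fi₁) = fiB := by
          funext f; rcases f with (f | f) | f <;> rfl
        have hpulla : pullInterp hamap hca (sumInterp fi₀ fi₁) = sumInterp fiB fia := by
          funext f; rcases f with ((f | f) | f) | f <;> rfl
        have hpullb : pullInterp hbmap hcb (sumInterp fi₀ fi₁) = sumInterp fiB fib := by
          funext f; rcases f with ((f | f) | f) | f <;> rfl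
        refine ⟨team V TB (δB.and (.teq gterm cterm)) fiB,
          team V TB (δB.and (.tne gterm cterm)) fiB, ?_, ?_, ?_, ?_⟩
        · ext pa
          constructor
          · rintro (⟨s, ⟨hδs, _⟩, rfl⟩ | ⟨s, ⟨hδs, _⟩, rfl⟩) <;>
              exact ⟨s, (hδBr fic fig s).1 hδs, (hmkB fic fig s)⟩
          · rintro ⟨s, hδs, rfl⟩
            by_cases hgc : gterm.realize fiB s = cterm.realize fiB s
            · exact Or.inl ⟨s, ⟨(hδBr fic fig s).2 hδs, hgc⟩, (hmkB fic fig s).symm⟩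
            · exact Or.inr ⟨s, ⟨(hδBr fic fig s).2 hδs, hgc⟩, (hmkB fic fig s).symm⟩
        · rw [Set.eq_empty_iff_forall_notMem]
          rintro pa ⟨⟨s₁, ⟨hδ1, hgc1⟩, he1⟩, ⟨s₂, ⟨hδ2, hgc2⟩, he2⟩⟩
          have hv : vals V T fi₀ s₁ = vals V T fi₀ s₂ := by
            apply vals_eq_of_mkPA (V := V) (T := T) (fi := fi₀)
            rw [← hmkB fic fig s₁, ← hmkB fic fig s₂, ← he1, ← he2]
          apply hgc2
          calc gterm.realize fiB s₂ = fig () (vals V T fi₀ s₂) := hgt fic fig s₂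
            _ = fig () (vals V T fi₀ s₁) := by rw [hv]
            _ = gterm.realize fiB s₁ := (hgt fic fig s₁).symm
            _ = cterm.realize fiB s₁ := hgc1
            _ = cterm.realize fiB s₂ := hct fic fig s₁ s₂
        · refine (hsem₁ M h2 fiB).2 ⟨fia, fun s hδs => ?_⟩
          have hth := hθ s ((hδBr fic fig s).1 hδs.1)
          rcases hth.1 with hne | hθ1
          · exfalso
            rw [EQF.realize_mapF, hpullB] at hne
            exact hne hδs.2
          · rw [EQF.realize_mapF, hpulla] at hθ1
            exact hθ1
        · refine (hsem₂ M h2 fiB).2 ⟨fib, fun s hδs => ?_⟩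
          have hth := hθ s ((hδBr fic fig s).1 hδs.1)
          rcases hth.2 with heq | hθ2
          · exfalso
            rw [EQF.realize_mapF, hpullB] at heq
            exact hδs.2 heq
          · rw [EQF.realize_mapF, hpullb] at hθ2
            exact hθ2
  | ex vv φ ih =>
    intro j V F₀ ar₀ T δ hni hnd hbV hfv hT hδ
    have hnd' : (vv :: boundVars φ).Nodup := hnd
    have hvnb : vv ∉ boundVars φ := (List.nodup_cons.1 hnd').1
    have hvV : vv ∉ V := hbV vv (List.mem_cons_self)
    set T' : ℕ → ETerm L (F₀ ⊕ Unit) (Sum.elim ar₀ fun _ => V.length) :=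
      fun x => if x = vv then .efunc (Sum.inr ()) (fun i => ETerm.inlF (T (V.get i)))
               else ETerm.inlF (T x) with hT'def
    obtain ⟨F₁, inst, ar₁, θ, hvθ, hsem⟩ := ih j (vv :: V) (F₀ ⊕ Unit)
      (Sum.elim ar₀ fun _ => V.length) T' (EQF.inlF δ)
      hni (List.nodup_cons.1 hnd').2
      (by
        intro x hx
        simp only [List.mem_cons, not_or]
        exact ⟨fun h => hvnb (h ▸ hx), hbV x (List.mem_cons_of_mem _ hx)⟩)
      (by
        intro x hx
        by_cases hxv : x = vv
        · exact hxv ▸ List.mem_cons_self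
        · exact List.mem_cons_of_mem _ (hfv x ⟨hx, hxv⟩))
      (by
        intro x hx
        by_cases hxv : x = vv
        · simp only [hT'def, if_pos hxv]
          exact fun i => ETerm.varsLT_mapF _ _ _ (hT _ (V.get_mem i))
        · simp only [hT'def, if_neg hxv]
          rcases List.mem_cons.1 hx with h | h
          · exact absurd h hxv
          · exact ETerm.varsLT_mapF _ _ _ (hT x h))
      (EQF.varsLT_mapF _ _ _ hδ)
    haveI := inst
    have hc3 : ∀ f : (F₀ ⊕ Unit) ⊕ F₁,
        Sum.elim ar₀ (Sum.elim (fun _ => V.length) ar₁)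
          ((Sum.elim (Sum.map id Sum.inl) (fun b => Sum.inr (Sum.inr b)) :
            (F₀ ⊕ Unit) ⊕ F₁ → F₀ ⊕ (Unit ⊕ F₁)) f)
          = Sum.elim (Sum.elim ar₀ fun _ => V.length) ar₁ f := by
      rintro ((a | u) | b) <;> rfl
    refine ⟨Unit ⊕ F₁, inferInstance, Sum.elim (fun _ => V.length) ar₁,
      θ.mapF (Sum.elim (Sum.map id Sum.inl) (fun b => Sum.inr (Sum.inr b))) hc3,
      EQF.varsLT_mapF _ _ _ (EQF.varsLT_mono (by simp only [uCount]; omega) _ hvθ), ?_⟩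
    intro M _ h2 fi₀
    haveI : Nonempty M := ⟨h2.choose⟩
    have hmk : ∀ (fiU : Interp Unit (fun _ => V.length) M) (s : ℕ → M),
        mkPA (vv :: V) T' (sumInterp fi₀ fiU) s
          = Function.update (mkPA V T fi₀ s) vv (some (fiU () (vals V T fi₀ s))) := by
      intro fiU s
      funext x
      by_cases hx : x = vv
      · subst hx
        rw [Function.update_self]
        simp only [mkPA, if_pos (List.mem_cons_self (a := x) (l := V)), hT'def, if_pos rfl]
        show some (fiU () fun i => (ETerm.inlF (T (V.get i))).realize (sumInterp fi₀ fiU) s) = _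
        exact congrArg some (congrArg _ (funext fun i => ETerm.realize_inlF fi₀ fiU s _))
      · have hmem : (x ∈ vv :: V) ↔ (x ∈ V) := by simp [List.mem_cons, hx]
        rw [Function.update_of_ne hx]
        simp only [mkPA, hmem, hT'def, if_neg hx]
        by_cases h : x ∈ V
        · simp only [if_pos h, Option.some.injEq]
          exact ETerm.realize_inlF fi₀ fiU s (T x)
        · simp only [if_neg h]
    have hteam : ∀ (fiU : Interp Unit (fun _ => V.length) M) (F : (ℕ → Option M) → M),
        (∀ s : ℕ → M, δ.realize fi₀ s → F (mkPA V T fi₀ s) = fiU () (vals V T fi₀ s)) →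
        team (vv :: V) T' (EQF.inlF δ) (sumInterp fi₀ fiU)
          = (fun pa => Function.update pa vv (some (F pa))) '' (team V T δ fi₀) := by
      intro fiU F hF
      ext pa'
      constructor
      · rintro ⟨s, hδs, rfl⟩
        rw [EQF.realize_inlF] at hδs
        refine ⟨mkPA V T fi₀ s, ⟨s, hδs, rfl⟩, ?_⟩
        show Function.update (mkPA V T fi₀ s) vv (some (F (mkPA V T fi₀ s)))
            = mkPA (vv :: V) T' (sumInterp fi₀ fiU) s
        rw [hmk fiU s, hF s hδs]
      · rintro ⟨pa, ⟨s, hδs, rfl⟩, rfl⟩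
        refine ⟨s, (EQF.realize_inlF fi₀ fiU s δ).2 hδs, ?_⟩
        show Function.update (mkPA V T fi₀ s) vv (some (F (mkPA V T fi₀ s)))
            = mkPA (vv :: V) T' (sumInterp fi₀ fiU) s
        rw [hmk fiU s, hF s hδs]
    constructor
    · intro hs
      obtain ⟨F, hsat⟩ := hs
      obtain ⟨g, hg⟩ := exists_fun_factor (δ.realize fi₀) (vals V T fi₀)
        (fun s => F (mkPA V T fi₀ s))
        (fun s s' _ _ hv => congrArg F (mkPA_eq_of_vals hv))
      obtain ⟨fi₁, hfi₁⟩ := (hsem M h2 (sumInterp fi₀ (fun _ => g))).1 (by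
        rw [hteam (fun _ => g) F (fun s h => (hg s h).symm)]; exact hsat)
      refine ⟨sumInterp (fun _ => g) fi₁, fun s hδs => ?_⟩
      rw [EQF.realize_mapF]
      have hpull : pullInterp _ hc3 (sumInterp fi₀ (sumInterp (fun _ => g) fi₁))
          = sumInterp (sumInterp fi₀ (fun _ => g)) fi₁ := by
        funext f; rcases f with (f | f) | f <;> rfl
      rw [hpull]
      exact hfi₁ s ((EQF.realize_inlF fi₀ (fun _ => g) s δ).2 hδs)
    · rintro ⟨fi', hθ⟩
      have hFs : ∀ s : ℕ → M, δ.realize fi₀ s →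
          (fun pa => (fun u => fi' (Sum.inl u)) ()
            (fun i => (pa (V.get i)).getD (Classical.arbitrary M)) :
            (ℕ → Option M) → M) (mkPA V T fi₀ s)
          = (fun u => fi' (Sum.inl u)) () (vals V T fi₀ s) := by
        intro s _
        refine congrArg _ (funext fun i => ?_)
        simp [mkPA, if_pos (V.get_mem i), vals]
      refine ⟨fun pa => (fun u => fi' (Sum.inl u)) ()
        (fun i => (pa (V.get i)).getD (Classical.arbitrary M)), ?_⟩
      rw [← hteam (fun u => fi' (Sum.inl u)) _ hFs]
      refine (hsem M h2 (sumInterp fi₀ (fun u => fi' (Sum.inl u)))).2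
        ⟨fun f => fi' (Sum.inr f), fun s hδs => ?_⟩
      have hδs' : δ.realize fi₀ s := (EQF.realize_inlF _ _ s δ).1 hδs
      have := hθ s hδs'
      rw [EQF.realize_mapF] at this
      have hpull : pullInterp _ hc3 (sumInterp fi₀ fi')
          = sumInterp (sumInterp fi₀ (fun u => fi' (Sum.inl u))) (fun f => fi' (Sum.inr f)) := by
        funext f; rcases f with (f | f) | f <;> rfl
      rwa [hpull] at this
  | all vv φ ih =>
    intro j V F₀ ar₀ T δ hni hnd hbV hfv hT hδ
    have hnd' : (vv :: boundVars φ).Nodup := hnd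
    have hvnb : vv ∉ boundVars φ := (List.nodup_cons.1 hnd').1
    have hvV : vv ∉ V := hbV vv (List.mem_cons_self)
    obtain ⟨F₁, inst, ar₁, θ, hvθ, hsem⟩ := ih (j+1) (vv :: V) F₀ ar₀
      (fun x => if x = vv then .var j else T x) δ
      hni (List.nodup_cons.1 hnd').2
      (by
        intro x hx
        simp only [List.mem_cons, not_or]
        exact ⟨fun h => hvnb (h ▸ hx), hbV x (List.mem_cons_of_mem _ hx)⟩)
      (by
        intro x hx
        by_cases hxv : x = vv
        · exact hxv ▸ List.mem_cons_self
        · exact List.mem_cons_of_mem _ (hfv x ⟨hx, hxv⟩))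
      (by
        intro x hx
        by_cases hxv : x = vv
        · simp only [if_pos hxv]; exact Nat.lt_succ_self j
        · simp only [if_neg hxv]
          rcases List.mem_cons.1 hx with h | h
          · exact absurd h hxv
          · exact ETerm.varsLT_mono (Nat.le_succ j) _ (hT x h))
      (EQF.varsLT_mono (Nat.le_succ j) _ hδ)
    refine ⟨F₁, inst, ar₁, θ, EQF.varsLT_mono (by simp only [uCount]; omega) _ hvθ, ?_⟩
    intro M _ h2 fi₀
    have hteam : team (vv :: V) (fun x => if x = vv then .var j else T x) δ fi₀
        = {t | ∃ pa ∈ team V T δ fi₀, ∃ m : M, t = Function.update pa vv (some m)} := by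
      ext pa'
      constructor
      · rintro ⟨s, hδs, rfl⟩
        refine ⟨mkPA V T fi₀ s, ⟨s, hδs, rfl⟩, s j, ?_⟩
        funext x
        by_cases hx : x = vv
        · subst hx
          simp [mkPA, Function.update_self, ETerm.realize]
        · have hmem : (x ∈ vv :: V) ↔ (x ∈ V) := by simp [List.mem_cons, hx]
          simp only [mkPA, Function.update_of_ne hx, hmem, if_neg hx]
      · rintro ⟨pa, ⟨s, hδs, rfl⟩, m, rfl⟩
        refine ⟨Function.update s j m, ?_, ?_⟩
        · exact (EQF.realize_congr_lt fi₀
            (fun n (hn : n < j) => (Function.update_of_ne (show n ≠ j by omega) m s).symm)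
            δ hδ).1 hδs
        · funext x
          by_cases hx : x = vv
          · subst hx
            simp [mkPA, Function.update_self, ETerm.realize]
          · have hmem : (x ∈ vv :: V) ↔ (x ∈ V) := by simp [List.mem_cons, hx]
            simp only [mkPA, Function.update_of_ne hx, hmem, if_neg hx]
            by_cases h : x ∈ V
            · simp only [if_pos h, Option.some.injEq]
              exact ((T x).realize_congr_lt fi₀
                (fun n (hn : n < j) => Function.update_of_ne (show n ≠ j by omega) m s)
                (hT x h)).symm
            · simp [if_neg h]
    show strictSat M _ (.all vv φ) ↔ _
    simp only [strictSat]
    rw [← hteam]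
    exact hsem M h2 fi₀

end TeamSem

namespace TeamSem

/-- For every sentence `ψ ∈ FO(=(…), ⊆)(k∀)` (dependence and inclusion atoms
allowed, but no independence atoms) there is a sentence `τ_ψ ∈ ESO_f(k∀)` (in
Skolem normal form `∃f₁…∃fₙ ∀x₁…∀x_r θ` with `r ≤ k` and `θ` quantifier-free) such
that for all structures `A` with at least two elements, `A ⊨ ψ` under strict team
semantics iff `A ⊨ τ_ψ`. -/
theorem dep_inc_to_eso {L : FirstOrder.Language.{u, v}} (k : ℕ) (ψ : TF L)
    (hsent : freeVars ψ = ∅) (hnodup : (boundVars ψ).Nodup) (huk : uCount ψ ≤ k)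
    (hnoindep : ¬ hasIndep ψ) :
    ∃ (n : ℕ) (ar : Fin n → ℕ) (r : ℕ) (θ : EQF L (Fin n) ar),
      r ≤ k ∧ θ.varsLT r ∧
      ∀ (A : Type w) [L.Structure A], (∃ a b : A, a ≠ b) →
        (tTrue A ψ ↔ esoTrue A θ) := by
  classical
  obtain ⟨F₁, inst, ar₁, θ, hvθ, hsem⟩ := key ψ 0 [] (Fin 1) (fun _ => 0)
    (fun _ => ETerm.var 0)
    (.teq (.efunc 0 (fun i => Fin.elim0 i)) (.efunc 0 (fun i => Fin.elim0 i)))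
    hnoindep hnodup (fun x _ => List.not_mem_nil)
    (fun x hx => absurd (hsent ▸ hx) (Set.notMem_empty x))
    (fun x hx => absurd hx (List.not_mem_nil))
    ⟨fun i => Fin.elim0 i, fun i => Fin.elim0 i⟩
  haveI := inst
  set e := Fintype.equivFin (Fin 1 ⊕ F₁) with he
  have hc : ∀ f : Fin 1 ⊕ F₁,
      (fun i => Sum.elim (fun _ => 0) ar₁ (e.symm i)) (e f) = Sum.elim (fun _ => 0) ar₁ f := by
    intro f; simp
  refine ⟨Fintype.card (Fin 1 ⊕ F₁), fun i => Sum.elim (fun _ => 0) ar₁ (e.symm i),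
    uCount ψ, θ.mapF (⇑e) hc, huk, ?_, ?_⟩
  · exact EQF.varsLT_mapF _ _ _ (EQF.varsLT_mono (by omega) _ hvθ)
  · intro A _ hA2
    haveI : Nonempty A := ⟨hA2.choose⟩
    have hteam : ∀ fi₀ : Interp (Fin 1) (fun _ => 0) A,
        team [] (fun _ => ETerm.var 0 : ℕ → ETerm L (Fin 1) fun _ => 0)
          (.teq (.efunc 0 (fun i => Fin.elim0 i)) (.efunc 0 (fun i => Fin.elim0 i))) fi₀
          = {emptyAssign A} := by
      intro fi₀
      ext pa
      constructor
      · rintro ⟨s, _, rfl⟩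
        show mkPA _ _ _ _ = emptyAssign A
        funext x
        simp [mkPA, emptyAssign]
      · rintro rfl
        refine ⟨fun _ => Classical.arbitrary A, rfl, ?_⟩
        funext x
        simp [mkPA, emptyAssign]
    constructor
    · intro htrue
      obtain ⟨fi₁, hfi₁⟩ := (hsem A hA2 (fun _ _ => Classical.arbitrary A)).1
        (by rw [hteam]; exact htrue)
      obtain ⟨fi₂, hfi₂⟩ := exists_interp_ext
        (ar₂ := fun i => Sum.elim (fun _ => 0) ar₁ (e.symm i)) (⇑e) e.injective hc
        (sumInterp (fun _ _ => Classical.arbitrary A) fi₁)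
      refine ⟨fi₂, fun s => ?_⟩
      rw [EQF.realize_mapF, hfi₂]
      exact hfi₁ s rfl
    · rintro ⟨fi, hfi⟩
      have hsplit : sumInterp (fun u => pullInterp (⇑e) hc fi (Sum.inl u))
          (fun q => pullInterp (⇑e) hc fi (Sum.inr q)) = pullInterp (⇑e) hc fi := by
        funext f; rcases f with f | f <;> rfl
      have hres := (hsem A hA2 (fun u => pullInterp (⇑e) hc fi (Sum.inl u))).2
        ⟨fun q => pullInterp (⇑e) hc fi (Sum.inr q), fun s _ => by
          have h := hfi s
          rw [EQF.realize_mapF, ← hsplit] at h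
          exact h⟩
      rw [hteam (fun u => pullInterp (⇑e) hc fi (Sum.inl u))] at hres
      exact hres


end TeamSem
end
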